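/- arXiv:2004.03197 — 5 statements merged into one kernel-verified Lean document; each statement's English description precedes it below -/
import Mathlib

section
/- Let y ∈ L¹(0,1) and let Ω(y) = { x ∈ L¹(0,1) : x ≺ y } be its Hardy–Littlewood–Pólya orbit. Then Ω(y) is convex and closed in the L¹-norm. -/
open MeasureTheory Set

/-- Right-continuous decreasing rearrangement (spectral scale, allowing negative
values) of a function on `(0,1)` with Lebesgue measure. -/
noncomputable def lam01 (f : ℝ → ℝ) (t : ℝ) : ℝ :=
  sInf {u : ℝ | (volume.restrict (Set.Ioo (0:ℝ) 1)) {a | u < f a} ≤ ENNReal.ofReal t}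

/-- Hardy–Littlewood–Pólya majorization on `(0,1)`:
`∫₀ˢ λ(x) ≤ ∫₀ˢ λ(y)` for all `s ∈ [0,1)` with equality at `s = 1`. -/
def Maj01 (x y : ℝ → ℝ) : Prop :=
  (∀ s ∈ Set.Ico (0:ℝ) 1,
    (∫ t in Set.Ioc (0:ℝ) s, lam01 x t) ≤ ∫ t in Set.Ioc (0:ℝ) s, lam01 y t) ∧
  (∫ t in Set.Ioc (0:ℝ) 1, lam01 x t) = ∫ t in Set.Ioc (0:ℝ) 1, lam01 y t

/-- The Hardy–Littlewood–Pólya orbit of `y` in `L¹(0,1)`. -/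
def Omega01 (y : ℝ → ℝ) : Set (ℝ → ℝ) :=
  {x | MeasureTheory.IntegrableOn x (Set.Ioo 0 1) ∧ Maj01 x y}

open ENNReal

namespace Aux12


noncomputable def m01 : Measure ℝ := volume.restrict (Set.Ioo (0:ℝ) 1)

noncomputable def dd (f : ℝ → ℝ) (u : ℝ) : ℝ≥0∞ := m01 {a | u < f a}

lemma m01_univ : m01 univ = 1 := by
  simp [m01, Measure.restrict_apply, Real.volume_Ioo]

instance : IsFiniteMeasure m01 := ⟨by rw [m01_univ]; exact one_lt_top⟩

lemma dd_anti (f : ℝ → ℝ) : Antitone (dd f) := fun u v huv =>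
  measure_mono (fun a (ha : v < f a) => lt_of_le_of_lt huv ha)

lemma dd_le_one (f : ℝ → ℝ) (u : ℝ) : dd f u ≤ 1 := by
  rw [← m01_univ]; exact measure_mono (subset_univ _)

lemma dd_ne_top (f : ℝ → ℝ) (u : ℝ) : dd f u ≠ ⊤ :=
  ne_top_of_le_ne_top one_ne_top (dd_le_one f u)

lemma lam01_eq (f : ℝ → ℝ) (t : ℝ) :
    lam01 f t = sInf {u : ℝ | dd f u ≤ ENNReal.ofReal t} := rfl

lemma dd_nullmeas {f : ℝ → ℝ} (hf : AEMeasurable f m01) (u : ℝ) :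
    NullMeasurableSet {a : ℝ | u < f a} m01 :=
  nullMeasurableSet_lt aemeasurable_const hf

/-- The defining set is nonempty for `t > 0`. -/
lemma S_nonempty {f : ℝ → ℝ} (hf : AEMeasurable f m01) {t : ℝ} (ht : 0 < t) :
    {u : ℝ | dd f u ≤ ENNReal.ofReal t}.Nonempty := by
  have hanti : Antitone (fun n : ℕ => {a : ℝ | (n:ℝ) < f a}) := by
    intro n m hnm a (ha : (m:ℝ) < f a)
    exact lt_of_le_of_lt (by exact_mod_cast hnm) ha
  have hI : (⋂ n : ℕ, {a : ℝ | (n:ℝ) < f a}) = ∅ := by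
    ext a; simp only [mem_iInter, mem_empty_iff_false, iff_false, not_forall, mem_setOf_eq, not_lt]
    obtain ⟨n, hn⟩ := exists_nat_ge (f a)
    exact ⟨n, hn⟩
  have h0 : (⨅ n : ℕ, dd f (n:ℝ)) = 0 := by
    have := hanti.measure_iInter (μ := m01) (fun n => dd_nullmeas hf _)
      ⟨0, measure_ne_top m01 _⟩
    rw [hI] at this
    show (⨅ n : ℕ, m01 {a : ℝ | (n:ℝ) < f a}) = 0
    rw [← this]; simp
  have : (⨅ n : ℕ, dd f (n:ℝ)) < ENNReal.ofReal t := by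
    rw [h0]; exact ENNReal.ofReal_pos.2 ht
  obtain ⟨n, hn⟩ := iInf_lt_iff.1 this
  exact ⟨(n:ℝ), hn.le⟩

/-- The defining set is bounded below for `t < 1`. -/
lemma S_bddBelow {f : ℝ → ℝ} {t : ℝ} (ht : t < 1) :
    BddBelow {u : ℝ | dd f u ≤ ENNReal.ofReal t} := by
  have hmono : Monotone (fun n : ℕ => {a : ℝ | -(n:ℝ) < f a}) := by
    intro n m hnm a (ha : -(n:ℝ) < f a)
    exact lt_of_le_of_lt (by simp; exact_mod_cast hnm) ha
  have hU : (⋃ n : ℕ, {a : ℝ | -(n:ℝ) < f a}) = univ := by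
    ext a; simp only [mem_iUnion, mem_univ, iff_true, mem_setOf_eq]
    obtain ⟨n, hn⟩ := exists_nat_gt (-f a)
    exact ⟨n, by linarith⟩
  have h1 : (⨆ n : ℕ, dd f (-(n:ℝ))) = 1 := by
    have := hmono.measure_iUnion (μ := m01)
    rw [hU, m01_univ] at this
    show (⨆ n : ℕ, m01 {a : ℝ | -(n:ℝ) < f a}) = 1
    rw [this]
  have h2 : ENNReal.ofReal t < ⨆ n : ℕ, dd f (-(n:ℝ)) := by
    rw [h1]
    calc ENNReal.ofReal t < ENNReal.ofReal 1 := by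
          rw [ENNReal.ofReal_lt_ofReal_iff one_pos]; exact ht
      _ = 1 := ENNReal.ofReal_one
  obtain ⟨n, hn⟩ := lt_iSup_iff.1 h2
  refine ⟨-(n:ℝ), fun u hu => ?_⟩
  by_contra h
  push_neg at h
  exact absurd hu (not_le.2 (lt_of_lt_of_le hn (dd_anti f h.le)))


variable {f x y : ℝ → ℝ}


/-- The infimum is attained: `dd f (lam01 f t) ≤ t`. -/
lemma lam_mem (hf : AEMeasurable f m01) {t : ℝ} (ht : t ∈ Ioo (0:ℝ) 1) :
    dd f (lam01 f t) ≤ ENNReal.ofReal t := by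
  set L := lam01 f t with hL
  have hne := S_nonempty hf ht.1
  have hbdd := S_bddBelow (f := f) ht.2
  have hmono : Monotone (fun n : ℕ => {a : ℝ | L + 1/((n:ℝ)+1) < f a}) := by
    intro n m hnm a ha
    simp only [mem_setOf_eq] at ha ⊢
    refine lt_of_le_of_lt ?_ ha
    have : 1/((m:ℝ)+1) ≤ 1/((n:ℝ)+1) := by
      apply one_div_le_one_div_of_le (by positivity)
      exact_mod_cast by exact_mod_cast Nat.succ_le_succ hnm
    linarith
  have hU : {a : ℝ | L < f a} = ⋃ n : ℕ, {a : ℝ | L + 1/((n:ℝ)+1) < f a} := by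
    ext a
    simp only [mem_setOf_eq, mem_iUnion]
    constructor
    · intro ha
      obtain ⟨n, hn⟩ := exists_nat_one_div_lt (sub_pos.2 ha)
      exact ⟨n, by linarith⟩
    · rintro ⟨n, hn⟩
      have : (0:ℝ) < 1/((n:ℝ)+1) := by positivity
      linarith
  have key : ∀ n : ℕ, dd f (L + 1/((n:ℝ)+1)) ≤ ENNReal.ofReal t := by
    intro n
    have hpos : (0:ℝ) < 1/((n:ℝ)+1) := by positivity
    have hlt : sInf {u : ℝ | dd f u ≤ ENNReal.ofReal t} < L + 1/((n:ℝ)+1) := by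
      rw [← lam01_eq]; show L < L + 1/((n:ℝ)+1); linarith
    obtain ⟨u, hu, hu2⟩ := exists_lt_of_csInf_lt hne hlt
    exact le_trans (dd_anti f hu2.le) hu
  show m01 {a : ℝ | L < f a} ≤ ENNReal.ofReal t
  rw [hU]
  have := hmono.measure_iUnion (μ := m01)
  rw [this]
  exact iSup_le key

/-- Key characterization: for `t ∈ (0,1)`, `u < λ(t) ↔ t < d(u)`. -/
lemma lam_key (hf : AEMeasurable f m01) {t : ℝ} (ht : t ∈ Ioo (0:ℝ) 1) (u : ℝ) :
    u < lam01 f t ↔ ENNReal.ofReal t < dd f u := by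
  constructor
  · intro h
    by_contra h2
    push_neg at h2
    have : lam01 f t ≤ u := by
      rw [lam01_eq]; exact csInf_le (S_bddBelow ht.2) h2
    exact absurd h (not_lt.2 this)
  · intro h
    by_contra h2
    push_neg at h2
    exact absurd (le_trans (dd_anti f h2) (lam_mem hf ht)) (not_le.2 h)

lemma lam_antitoneOn (hf : AEMeasurable f m01) : AntitoneOn (lam01 f) (Ioo (0:ℝ) 1) := by
  intro t ht t' ht' htt'
  rw [lam01_eq, lam01_eq]
  exact csInf_le_csInf (S_bddBelow ht'.2) (S_nonempty hf ht.1)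
    (fun u hu => le_trans hu (ENNReal.ofReal_le_ofReal htt'))

lemma lam_aemeas (hf : AEMeasurable f m01) : AEMeasurable (lam01 f) m01 :=
  aemeasurable_restrict_of_antitoneOn measurableSet_Ioo (lam_antitoneOn hf)

/-- preimage structure -/
lemma lam_gt_set (hf : AEMeasurable f m01) (u : ℝ) :
    {t : ℝ | u < lam01 f t} ∩ Ioo (0:ℝ) 1 = Ioo (0:ℝ) ((dd f u).toReal) := by
  have hD1 : (dd f u).toReal ≤ 1 := by
    have := dd_le_one f u
    calc (dd f u).toReal ≤ (1:ℝ≥0∞).toReal := toReal_mono one_ne_top this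
      _ = 1 := by simp
  ext t
  simp only [mem_inter_iff, mem_setOf_eq, mem_Ioo]
  constructor
  · rintro ⟨h1, h2, h3⟩
    refine ⟨h2, ?_⟩
    rw [lam_key hf ⟨h2, h3⟩ u] at h1
    rwa [ENNReal.ofReal_lt_iff_lt_toReal h2.le (dd_ne_top f u)] at h1
  · rintro ⟨h1, h2⟩
    have h3 : t < 1 := lt_of_lt_of_le h2 hD1
    refine ⟨?_, h1, h3⟩
    rw [lam_key hf ⟨h1, h3⟩ u]
    rwa [ENNReal.ofReal_lt_iff_lt_toReal h1.le (dd_ne_top f u)]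

/-- Equimeasurability (upper sets). -/
lemma lam_dist (hf : AEMeasurable f m01) (u : ℝ) :
    m01 {t : ℝ | u < lam01 f t} = dd f u := by
  rw [m01, Measure.restrict_apply' measurableSet_Ioo, lam_gt_set hf u, Real.volume_Ioo,
    sub_zero, ENNReal.ofReal_toReal (dd_ne_top f u)]

/-- Lower-level distribution equality. -/
lemma lam_dist_lt (hf : AEMeasurable f m01) (w : ℝ) :
    m01 {t : ℝ | lam01 f t < w} = m01 {a : ℝ | f a < w} := by
  have hge : ∀ (g : ℝ → ℝ), AEMeasurable g m01 →
      {a : ℝ | w ≤ g a} = ⋂ n : ℕ, {a : ℝ | w - 1/((n:ℝ)+1) < g a} := by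
    intro g _
    ext a
    simp only [mem_setOf_eq, mem_iInter]
    constructor
    · intro h n
      have : (0:ℝ) < 1/((n:ℝ)+1) := by positivity
      linarith
    · intro h
      by_contra hc
      push_neg at hc
      obtain ⟨n, hn⟩ := exists_nat_one_div_lt (sub_pos.2 hc)
      have := h n
      linarith
  have hanti : ∀ (g : ℝ → ℝ), Antitone (fun n : ℕ => {a : ℝ | w - 1/((n:ℝ)+1) < g a}) := by
    intro g n m hnm a ha
    simp only [mem_setOf_eq] at ha ⊢
    have : 1/((m:ℝ)+1) ≤ 1/((n:ℝ)+1) := by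
      apply one_div_le_one_div_of_le (by positivity)
      exact_mod_cast Nat.succ_le_succ hnm
    linarith
  have step1 : m01 {t : ℝ | w ≤ lam01 f t} = m01 {a : ℝ | w ≤ f a} := by
    rw [hge _ (lam_aemeas hf), hge _ hf]
    rw [(hanti (lam01 f)).measure_iInter
      (fun n => nullMeasurableSet_lt aemeasurable_const (lam_aemeas hf))
      ⟨0, measure_ne_top m01 _⟩]
    rw [(hanti f).measure_iInter
      (fun n => nullMeasurableSet_lt aemeasurable_const hf)
      ⟨0, measure_ne_top m01 _⟩]
    exact iInf_congr fun n => lam_dist hf _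
  have hc1 : {t : ℝ | lam01 f t < w} = {t : ℝ | w ≤ lam01 f t}ᶜ := by
    ext t; simp [not_le]
  have hc2 : {a : ℝ | f a < w} = {a : ℝ | w ≤ f a}ᶜ := by
    ext a; simp [not_le]
  rw [hc1, hc2,
    measure_compl₀ (nullMeasurableSet_le aemeasurable_const (lam_aemeas hf)) (measure_ne_top _ _),
    measure_compl₀ (nullMeasurableSet_le aemeasurable_const hf) (measure_ne_top _ _), step1]

/-- Layer cake for the positive cut. -/
lemma lint_cut (g : ℝ → ℝ) (hg : AEMeasurable g m01) (r : ℝ) :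
    ∫⁻ a, ENNReal.ofReal (max (g a - r) 0) ∂m01
      = ∫⁻ v in Ioi (0:ℝ), m01 {a | r + v < g a} := by
  have h0 := lintegral_eq_lintegral_meas_lt (f := fun a => max (g a - r) 0) m01
    (Filter.Eventually.of_forall fun a => le_max_right _ _)
    ((hg.sub aemeasurable_const).max aemeasurable_const)
  rw [h0]
  refine setLIntegral_congr_fun measurableSet_Ioi
    (fun v hv => ?_)
  congr 1
  ext a
  simp only [mem_setOf_eq, lt_max_iff]
  constructor
  · rintro (h | h)
    · linarith
    · exact absurd h (not_lt.2 (le_of_lt hv))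
  · intro h; left; linarith

/-- Layer cake for the negative cut. -/
lemma lint_cut_neg (g : ℝ → ℝ) (hg : AEMeasurable g m01) (r : ℝ) :
    ∫⁻ a, ENNReal.ofReal (max (r - g a) 0) ∂m01
      = ∫⁻ v in Ioi (0:ℝ), m01 {a | g a < r - v} := by
  have h0 := lintegral_eq_lintegral_meas_lt (f := fun a => max (r - g a) 0) m01
    (Filter.Eventually.of_forall fun a => le_max_right _ _)
    ((aemeasurable_const.sub hg).max aemeasurable_const)
  rw [h0]
  refine setLIntegral_congr_fun measurableSet_Ioi
    (fun v hv => ?_)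
  congr 1
  ext a
  simp only [mem_setOf_eq, lt_max_iff]
  constructor
  · rintro (h | h)
    · linarith
    · exact absurd h (not_lt.2 (le_of_lt hv))
  · intro h; left; linarith

/-- Equality of positive-cut lintegrals between `f` and its rearrangement. -/
lemma lint_cut_eq (hf : AEMeasurable f m01) (r : ℝ) :
    ∫⁻ t, ENNReal.ofReal (max (lam01 f t - r) 0) ∂m01
      = ∫⁻ a, ENNReal.ofReal (max (f a - r) 0) ∂m01 := by
  rw [lint_cut _ (lam_aemeas hf) r, lint_cut _ hf r]
  exact lintegral_congr fun v => by rw [lam_dist hf]; rfl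

lemma lint_cut_neg_eq (hf : AEMeasurable f m01) (r : ℝ) :
    ∫⁻ t, ENNReal.ofReal (max (r - lam01 f t) 0) ∂m01
      = ∫⁻ a, ENNReal.ofReal (max (r - f a) 0) ∂m01 := by
  rw [lint_cut_neg _ (lam_aemeas hf) r, lint_cut_neg _ hf r]
  exact lintegral_congr fun v => by rw [lam_dist_lt hf]

lemma lint_ne_top {g : ℝ → ℝ} (hg : Integrable g m01) :
    (∫⁻ a, ENNReal.ofReal (g a) ∂m01) ≠ ⊤ := by
  refine ne_top_of_le_ne_top hg.2.ne (lintegral_mono fun a => ?_)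
  exact Real.ofReal_le_enorm (g a)

lemma integrable_cut {g : ℝ → ℝ} (hg : Integrable g m01) (r : ℝ) :
    Integrable (fun a => max (g a - r) 0) m01 :=
  (hg.sub (integrable_const r)).pos_part

lemma integrable_cut_neg {g : ℝ → ℝ} (hg : Integrable g m01) (r : ℝ) :
    Integrable (fun a => max (r - g a) 0) m01 :=
  ((integrable_const r).sub hg).pos_part

/-- The rearrangement is integrable. -/
lemma lam_integrable (hf : Integrable f m01) : Integrable (lam01 f) m01 := by
  refine ⟨(lam_aemeas hf.aemeasurable).aestronglyMeasurable, ?_⟩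
  show (∫⁻ t, (‖lam01 f t‖₊ : ℝ≥0∞) ∂m01) < ⊤
  have hpt : ∀ x : ℝ, (‖x‖₊ : ℝ≥0∞)
      = ENNReal.ofReal (max (x - 0) 0) + ENNReal.ofReal (max (0 - x) 0) := by
    intro x
    rw [← enorm_eq_nnnorm, Real.enorm_eq_ofReal_abs, sub_zero, zero_sub]
    rcases le_total x 0 with h | h
    · rw [abs_of_nonpos h, max_eq_right h, max_eq_left (neg_nonneg.2 h)]
      simp
    · rw [abs_of_nonneg h, max_eq_left h, max_eq_right (neg_nonpos.2 h)]
      simp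
  calc ∫⁻ t, (‖lam01 f t‖₊ : ℝ≥0∞) ∂m01
      = ∫⁻ t, (ENNReal.ofReal (max (lam01 f t - 0) 0)
          + ENNReal.ofReal (max (0 - lam01 f t) 0)) ∂m01 := lintegral_congr fun t => hpt _
    _ = (∫⁻ t, ENNReal.ofReal (max (lam01 f t - 0) 0) ∂m01)
          + ∫⁻ t, ENNReal.ofReal (max (0 - lam01 f t) 0) ∂m01 := by
        refine lintegral_add_left' ?_ _
        exact (((lam_aemeas hf.aemeasurable).sub aemeasurable_const).max
          aemeasurable_const).ennreal_ofReal
    _ = (∫⁻ a, ENNReal.ofReal (max (f a - 0) 0) ∂m01)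
          + ∫⁻ a, ENNReal.ofReal (max (0 - f a) 0) ∂m01 := by
        rw [lint_cut_eq hf.aemeasurable 0, lint_cut_neg_eq hf.aemeasurable 0]
    _ < ⊤ := by
        rw [lt_top_iff_ne_top]
        refine ENNReal.add_ne_top.2 ⟨?_, ?_⟩
        · exact lint_ne_top (integrable_cut hf 0)
        · exact lint_ne_top (integrable_cut_neg hf 0)

/-- Equality of total integrals. -/
lemma lam_integral_eq (hf : Integrable f m01) :
    ∫ t, lam01 f t ∂m01 = ∫ a, f a ∂m01 := by
  have hofReal : ∀ x : ℝ, ENNReal.ofReal x = ENNReal.ofReal (max (x - 0) 0) := by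
    intro x
    rw [sub_zero]
    rcases le_total x 0 with h | h
    · rw [max_eq_right h, ENNReal.ofReal_eq_zero.2 h]; simp
    · rw [max_eq_left h]
  have hofRealneg : ∀ x : ℝ, ENNReal.ofReal (-x) = ENNReal.ofReal (max (0 - x) 0) := by
    intro x
    rw [zero_sub]
    have := hofReal (-x)
    rwa [sub_zero] at this
  rw [integral_eq_lintegral_pos_part_sub_lintegral_neg_part hf,
    integral_eq_lintegral_pos_part_sub_lintegral_neg_part (lam_integrable hf)]
  congr 1
  · congr 1
    calc ∫⁻ t, ENNReal.ofReal (lam01 f t) ∂m01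
        = ∫⁻ t, ENNReal.ofReal (max (lam01 f t - 0) 0) ∂m01 :=
          lintegral_congr fun t => hofReal _
      _ = ∫⁻ a, ENNReal.ofReal (max (f a - 0) 0) ∂m01 := lint_cut_eq hf.aemeasurable 0
      _ = ∫⁻ a, ENNReal.ofReal (f a) ∂m01 := (lintegral_congr fun a => hofReal _).symm
  · congr 1
    calc ∫⁻ t, ENNReal.ofReal (-lam01 f t) ∂m01
        = ∫⁻ t, ENNReal.ofReal (max (0 - lam01 f t) 0) ∂m01 :=
          lintegral_congr fun t => hofRealneg _
      _ = ∫⁻ a, ENNReal.ofReal (max (0 - f a) 0) ∂m01 := lint_cut_neg_eq hf.aemeasurable 0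
      _ = ∫⁻ a, ENNReal.ofReal (-f a) ∂m01 := (lintegral_congr fun a => hofRealneg _).symm

/-- Equality of cut integrals (Bochner). -/
lemma G_eq (hf : Integrable f m01) (r : ℝ) :
    ∫ t, max (lam01 f t - r) 0 ∂m01 = ∫ a, max (f a - r) 0 ∂m01 := by
  have h1 := integral_eq_lintegral_of_nonneg_ae (f := fun t => max (lam01 f t - r) 0)
      (μ := m01) (Filter.Eventually.of_forall fun t => le_max_right _ _)
      (integrable_cut (lam_integrable hf) r).1
  have h2 := integral_eq_lintegral_of_nonneg_ae (f := fun a => max (f a - r) 0)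
      (μ := m01) (Filter.Eventually.of_forall fun a => le_max_right _ _)
      (integrable_cut hf r).1
  rw [h1, h2, lint_cut_eq hf.aemeasurable r]

-- real work starts here

lemma restrict_Ioc_eq_Ioo (a b : ℝ) :
    volume.restrict (Ioc a b) = volume.restrict (Ioo a b) :=
  (Measure.restrict_congr_set Ioo_ae_eq_Ioc).symm

lemma lam_integrableOn_Ioo (hf : Integrable f m01) {s : ℝ} (hs : s ≤ 1) :
    IntegrableOn (lam01 f) (Ioo 0 s) volume := by
  have h : IntegrableOn (lam01 f) (Ioo 0 1) volume := lam_integrable hf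
  exact h.mono_set (Ioo_subset_Ioo le_rfl hs)

lemma cut_integrableOn_Ioo (hg : Integrable f m01) (r : ℝ) {s : ℝ} (hs : s ≤ 1) :
    IntegrableOn (fun a => max (f a - r) 0) (Ioo 0 s) volume := by
  have h : IntegrableOn (fun a => max (f a - r) 0) (Ioo 0 1) volume := integrable_cut hg r
  exact h.mono_set (Ioo_subset_Ioo le_rfl hs)

lemma integral_sub_const {s : ℝ} (hs0 : 0 ≤ s) (hf : Integrable f m01) (hs : s ≤ 1) (r : ℝ) :
    ∫ t in Ioo (0:ℝ) s, (lam01 f t - r) =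
      (∫ t in Ioo (0:ℝ) s, lam01 f t) - s * r := by
  rw [integral_sub (lam_integrableOn_Ioo hf hs) (integrableOn_const (by
    rw [Real.volume_Ioo]; exact ofReal_ne_top))]
  rw [setIntegral_const,
    Real.volume_real_Ioo_of_le hs0, sub_zero, smul_eq_mul]

lemma easy_ineq (hf : Integrable f m01) {s : ℝ} (hs : s ∈ Icc (0:ℝ) 1) (r : ℝ) :
    (∫ t in Ioc (0:ℝ) s, lam01 f t) ≤ s * r + ∫ t, max (lam01 f t - r) 0 ∂m01 := by
  have h1 : (∫ t in Ioc (0:ℝ) s, lam01 f t) = ∫ t in Ioo (0:ℝ) s, lam01 f t := by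
    rw [restrict_Ioc_eq_Ioo]
  have h2 : (∫ t in Ioo (0:ℝ) s, (lam01 f t - r)) ≤ ∫ t, max (lam01 f t - r) 0 ∂m01 := by
    calc ∫ t in Ioo (0:ℝ) s, (lam01 f t - r)
        ≤ ∫ t in Ioo (0:ℝ) s, max (lam01 f t - r) 0 := by
          refine integral_mono ((lam_integrableOn_Ioo hf hs.2).sub
            (integrableOn_const (by rw [Real.volume_Ioo]; exact ofReal_ne_top)))
            (cut_integrableOn_Ioo (lam_integrable hf) r hs.2) (fun t => le_max_left _ _)
      _ ≤ ∫ t in Ioo (0:ℝ) 1, max (lam01 f t - r) 0 := by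
          refine setIntegral_mono_set (cut_integrableOn_Ioo (lam_integrable hf) r le_rfl)
            (Filter.Eventually.of_forall fun t => le_max_right _ _)
            (HasSubset.Subset.eventuallyLE (Ioo_subset_Ioo le_rfl hs.2))
      _ = ∫ t, max (lam01 f t - r) 0 ∂m01 := rfl
  have h3 := integral_sub_const hs.1 hf hs.2 r
  rw [h1]
  linarith

lemma exact_eq (hf : Integrable f m01) (r : ℝ) :
    (∫ t, max (lam01 f t - r) 0 ∂m01)
      = (∫ t in Ioc (0:ℝ) ((dd f r).toReal), lam01 f t) - (dd f r).toReal * r := by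
  set D := (dd f r).toReal with hD
  have hD0 : 0 ≤ D := toReal_nonneg
  have hD1 : D ≤ 1 := by
    calc D ≤ (1:ℝ≥0∞).toReal := toReal_mono one_ne_top (dd_le_one f r)
      _ = 1 := by simp
  have hset := lam_gt_set hf.aemeasurable r
  have step1 : ∀ t ∈ Ioo (0:ℝ) 1,
      max (lam01 f t - r) 0 = indicator (Ioo (0:ℝ) D) (fun t => lam01 f t - r) t := by
    intro t ht
    by_cases htD : t ∈ Ioo (0:ℝ) D
    · rw [indicator_of_mem htD]
      have : t ∈ {t : ℝ | r < lam01 f t} ∩ Ioo (0:ℝ) 1 := by rw [hset]; exact htD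
      exact max_eq_left (le_of_lt (sub_pos.2 this.1))
    · rw [indicator_of_notMem htD]
      have : ¬ (r < lam01 f t) := by
        intro hr
        exact htD (by rw [← hset]; exact ⟨hr, ht⟩)
      exact max_eq_right (by linarith [not_lt.1 this])
  have step2 : (∫ t, max (lam01 f t - r) 0 ∂m01)
      = ∫ t in Ioo (0:ℝ) 1, indicator (Ioo (0:ℝ) D) (fun t => lam01 f t - r) t := by
    exact setIntegral_congr_fun measurableSet_Ioo step1
  rw [step2, integral_indicator measurableSet_Ioo, Measure.restrict_restrict measurableSet_Ioo,
    inter_eq_self_of_subset_left (Ioo_subset_Ioo le_rfl hD1),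
    integral_sub_const hD0 hf hD1 r, restrict_Ioc_eq_Ioo]

-- part 5

/-- The cut (Hardy–Littlewood–Pólya) criterion. -/
def Cut (x y : ℝ → ℝ) : Prop :=
  (∀ r : ℝ, (∫ a, max (x a - r) 0 ∂m01) ≤ ∫ a, max (y a - r) 0 ∂m01) ∧
  (∫ a, x a ∂m01) = ∫ a, y a ∂m01

lemma total_eq (hf : Integrable f m01) :
    (∫ t in Ioc (0:ℝ) 1, lam01 f t) = ∫ a, f a ∂m01 := by
  rw [restrict_Ioc_eq_Ioo, ← lam_integral_eq hf]; rfl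

lemma maj_Icc (hx : Integrable x m01) (hy : Integrable y m01) (h : Maj01 x y)
    {s : ℝ} (hs : s ∈ Icc (0:ℝ) 1) :
    (∫ t in Ioc (0:ℝ) s, lam01 x t) ≤ ∫ t in Ioc (0:ℝ) s, lam01 y t := by
  rcases lt_or_eq_of_le hs.2 with h1 | h1
  · exact h.1 s ⟨hs.1, h1⟩
  · rw [h1]; exact h.2.le

lemma maj_imp_cut (hx : Integrable x m01) (hy : Integrable y m01) (h : Maj01 x y) :
    Cut x y := by
  constructor
  · intro r
    have hD : (dd x r).toReal ∈ Icc (0:ℝ) 1 := by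
      refine ⟨toReal_nonneg, ?_⟩
      calc (dd x r).toReal ≤ (1:ℝ≥0∞).toReal := toReal_mono one_ne_top (dd_le_one x r)
        _ = 1 := by simp
    calc (∫ a, max (x a - r) 0 ∂m01) = ∫ t, max (lam01 x t - r) 0 ∂m01 := (G_eq hx r).symm
      _ = (∫ t in Ioc (0:ℝ) ((dd x r).toReal), lam01 x t) - (dd x r).toReal * r :=
          exact_eq hx r
      _ ≤ (∫ t in Ioc (0:ℝ) ((dd x r).toReal), lam01 y t) - (dd x r).toReal * r := by
          have := maj_Icc hx hy h hD
          linarith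
      _ ≤ ((dd x r).toReal * r + ∫ t, max (lam01 y t - r) 0 ∂m01)
            - (dd x r).toReal * r := by
          have := easy_ineq hy hD r
          linarith
      _ = ∫ t, max (lam01 y t - r) 0 ∂m01 := by ring
      _ = ∫ a, max (y a - r) 0 ∂m01 := G_eq hy r
  · rw [← total_eq hx, ← total_eq hy]; exact h.2

lemma cut_imp_maj (hx : Integrable x m01) (hy : Integrable y m01) (h : Cut x y) :
    Maj01 x y := by
  constructor
  · rintro s ⟨hs0, hs1⟩
    rcases eq_or_lt_of_le hs0 with h0 | h0
    · rw [← h0]; simp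
    · set r := lam01 y s with hr
      set D := (dd y r).toReal with hDdef
      have hsIoo : s ∈ Ioo (0:ℝ) 1 := ⟨h0, hs1⟩
      have hdds : dd y r ≤ ENNReal.ofReal s := lam_mem hy.aemeasurable hsIoo
      have hD0 : 0 ≤ D := toReal_nonneg
      have hDs : D ≤ s := by
        calc D ≤ (ENNReal.ofReal s).toReal := toReal_mono ofReal_ne_top hdds
          _ = s := toReal_ofReal hs0
      have hD1 : D ≤ 1 := hDs.trans hs1.le
      -- λy is constant = r on Ioc D s
      have flat : ∀ t ∈ Ioc D s, lam01 y t = r := by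
        rintro t ⟨htD, hts⟩
        have htIoo : t ∈ Ioo (0:ℝ) 1 := ⟨lt_of_le_of_lt hD0 htD, lt_of_le_of_lt hts hs1⟩
        have hle : lam01 y t ≤ r := by
          by_contra hc
          push_neg at hc
          rw [lam_key hy.aemeasurable htIoo r] at hc
          have : ENNReal.ofReal t ≤ ENNReal.ofReal D := by
            rw [hDdef, ofReal_toReal (dd_ne_top y r)]
            exact hc.le
          have h2 : t ≤ D := by
            rwa [ENNReal.ofReal_le_ofReal_iff hD0] at this
          exact absurd h2 (not_le.2 htD)
        have hge : r ≤ lam01 y t :=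
          lam_antitoneOn hy.aemeasurable htIoo hsIoo hts
        linarith
      have hsplit : (∫ t in Ioc (0:ℝ) s, lam01 y t)
          = (∫ t in Ioc (0:ℝ) D, lam01 y t) + ∫ t in Ioc D s, lam01 y t := by
        rw [← Ioc_union_Ioc_eq_Ioc hD0 hDs]
        refine setIntegral_union (Set.Ioc_disjoint_Ioc_of_le le_rfl) measurableSet_Ioc ?_ ?_
        · rw [IntegrableOn, restrict_Ioc_eq_Ioo]
          exact lam_integrableOn_Ioo hy hD1
        · have h' : IntegrableOn (lam01 y) (Ioo 0 s) volume := lam_integrableOn_Ioo hy hs1.le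
          have h'' : IntegrableOn (lam01 y) (Ioc 0 s) volume := by
            rw [IntegrableOn, restrict_Ioc_eq_Ioo]; exact h'
          exact h''.mono_set (Ioc_subset_Ioc_left hD0)
      have hflatint : (∫ t in Ioc D s, lam01 y t) = (s - D) * r := by
        rw [setIntegral_congr_fun measurableSet_Ioc flat, setIntegral_const,
          Real.volume_real_Ioc_of_le hDs, smul_eq_mul]
      calc (∫ t in Ioc (0:ℝ) s, lam01 x t)
          ≤ s * r + ∫ t, max (lam01 x t - r) 0 ∂m01 := easy_ineq hx ⟨hs0, hs1.le⟩ r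
        _ = s * r + ∫ a, max (x a - r) 0 ∂m01 := by rw [G_eq hx r]
        _ ≤ s * r + ∫ a, max (y a - r) 0 ∂m01 := by linarith [h.1 r]
        _ = s * r + ∫ t, max (lam01 y t - r) 0 ∂m01 := by rw [G_eq hy r]
        _ = s * r + ((∫ t in Ioc (0:ℝ) D, lam01 y t) - D * r) := by rw [exact_eq hy r]
        _ = (∫ t in Ioc (0:ℝ) D, lam01 y t) + (s - D) * r := by ring
        _ = (∫ t in Ioc (0:ℝ) D, lam01 y t) + ∫ t in Ioc D s, lam01 y t := by
            rw [hflatint]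
        _ = ∫ t in Ioc (0:ℝ) s, lam01 y t := hsplit.symm
  · rw [total_eq hx, total_eq hy]; exact h.2


end Aux12

open Aux12 in
/-- `Ω(y)` is convex and closed in the `L¹(0,1)`-norm. -/
theorem stmt12 (y : ℝ → ℝ) (hy : IntegrableOn y (Set.Ioo 0 1)) :
    Convex ℝ (Omega01 y) ∧
    (∀ (x : ℕ → ℝ → ℝ) (z : ℝ → ℝ), (∀ n, x n ∈ Omega01 y) →
      IntegrableOn z (Set.Ioo 0 1) →
      Filter.Tendsto (fun n => ∫ t in Set.Ioo (0:ℝ) 1, |x n t - z t|)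
        Filter.atTop (nhds 0) →
      z ∈ Omega01 y) := by
  have hy1 : Integrable y m01 := hy
  constructor
  · -- convexity
    rintro x hx x' hx' a b ha hb hab
    have hx1 : Integrable x m01 := hx.1
    have hx'1 : Integrable x' m01 := hx'.1
    have hcx := maj_imp_cut hx1 hy1 hx.2
    have hcx' := maj_imp_cut hx'1 hy1 hx'.2
    have hxcomb : Integrable (fun t => a * x t + b * x' t) m01 :=
      (hx1.const_mul a).add (hx'1.const_mul b)
    have hfun : (a • x + b • x') = fun t => a * x t + b * x' t := by
      funext t; simp [smul_eq_mul]
    refine ⟨?_, ?_⟩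
    · show Integrable (a • x + b • x') m01
      rw [hfun]; exact hxcomb
    · rw [hfun]
      refine cut_imp_maj hxcomb hy1 ⟨?_, ?_⟩
      · intro r
        have hpt : ∀ t : ℝ, max (a * x t + b * x' t - r) 0
            ≤ a * max (x t - r) 0 + b * max (x' t - r) 0 := by
          intro t
          have h1 : a * x t + b * x' t - r = a * (x t - r) + b * (x' t - r) := by
            have : a * r + b * r = r := by rw [← add_mul, hab, one_mul]
            ring_nf
            nlinarith [this]
          rw [h1]
          refine max_le ?_ (by positivity)
          have h2 : a * (x t - r) ≤ a * max (x t - r) 0 :=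
            mul_le_mul_of_nonneg_left (le_max_left _ _) ha
          have h3 : b * (x' t - r) ≤ b * max (x' t - r) 0 :=
            mul_le_mul_of_nonneg_left (le_max_left _ _) hb
          linarith
        calc (∫ t, max (a * x t + b * x' t - r) 0 ∂m01)
            ≤ ∫ t, (a * max (x t - r) 0 + b * max (x' t - r) 0) ∂m01 := by
              refine integral_mono (integrable_cut hxcomb r) ?_ hpt
              exact ((integrable_cut hx1 r).const_mul a).add
                ((integrable_cut hx'1 r).const_mul b)
          _ = a * (∫ t, max (x t - r) 0 ∂m01) + b * ∫ t, max (x' t - r) 0 ∂m01 := by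
              rw [integral_add ((integrable_cut hx1 r).const_mul a)
                ((integrable_cut hx'1 r).const_mul b),
                integral_const_mul, integral_const_mul]
          _ ≤ a * (∫ t, max (y t - r) 0 ∂m01) + b * ∫ t, max (y t - r) 0 ∂m01 := by
              have := hcx.1 r
              have := hcx'.1 r
              nlinarith
          _ = ∫ t, max (y t - r) 0 ∂m01 := by rw [← add_mul, hab, one_mul]
      · rw [integral_add (hx1.const_mul a) (hx'1.const_mul b),
          integral_const_mul, integral_const_mul, hcx.2, hcx'.2, ← add_mul, hab, one_mul]
  · -- closedness
    rintro x z hxn hz hlim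
    have hz1 : Integrable z m01 := hz
    have hx1 : ∀ n, Integrable (x n) m01 := fun n => (hxn n).1
    have hcut : ∀ n, Cut (x n) y := fun n => maj_imp_cut (hx1 n) hy1 (hxn n).2
    have hlim' : Filter.Tendsto (fun n => ∫ t, |x n t - z t| ∂m01)
        Filter.atTop (nhds 0) := hlim
    refine ⟨hz, cut_imp_maj hz1 hy1 ⟨?_, ?_⟩⟩
    · intro r
      have hbound : ∀ n, (∫ a, max (z a - r) 0 ∂m01)
          ≤ (∫ a, max (y a - r) 0 ∂m01) + ∫ t, |x n t - z t| ∂m01 := by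
        intro n
        have hpt : ∀ t : ℝ, max (z t - r) 0 ≤ max (x n t - r) 0 + |x n t - z t| := by
          intro t
          refine max_le ?_ (by positivity)
          have h1 : z t - r ≤ (x n t - r) + |x n t - z t| := by
            have := abs_le.1 (le_refl |x n t - z t|) |>.1
            have habs : -(x n t - z t) ≤ |x n t - z t| := neg_le_abs _
            linarith
          calc z t - r ≤ (x n t - r) + |x n t - z t| := h1
            _ ≤ max (x n t - r) 0 + |x n t - z t| := by
                linarith [le_max_left (x n t - r) (0:ℝ)]
        have habs : Integrable (fun t => |x n t - z t|) m01 := ((hx1 n).sub hz1).abs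
        calc (∫ a, max (z a - r) 0 ∂m01)
            ≤ ∫ t, (max (x n t - r) 0 + |x n t - z t|) ∂m01 := by
              refine integral_mono (integrable_cut hz1 r) ?_ hpt
              exact (integrable_cut (hx1 n) r).add habs
          _ = (∫ t, max (x n t - r) 0 ∂m01) + ∫ t, |x n t - z t| ∂m01 := by
              rw [integral_add (integrable_cut (hx1 n) r) habs]
          _ ≤ (∫ a, max (y a - r) 0 ∂m01) + ∫ t, |x n t - z t| ∂m01 := by
              linarith [(hcut n).1 r]
      have htend : Filter.Tendsto
          (fun n => (∫ a, max (y a - r) 0 ∂m01) + ∫ t, |x n t - z t| ∂m01)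
          Filter.atTop (nhds ((∫ a, max (y a - r) 0 ∂m01) + 0)) :=
        Filter.Tendsto.add tendsto_const_nhds hlim'
      rw [add_zero] at htend
      exact ge_of_tendsto htend (Filter.Eventually.of_forall hbound)
    · have hbound : ∀ n, |(∫ a, z a ∂m01) - ∫ a, y a ∂m01| ≤ ∫ t, |x n t - z t| ∂m01 := by
        intro n
        rw [← (hcut n).2]
        have h1 : (∫ a, z a ∂m01) - (∫ a, x n a ∂m01) = ∫ a, (z a - x n a) ∂m01 :=
          (integral_sub hz1 (hx1 n)).symm
        rw [h1]
        calc |∫ a, (z a - x n a) ∂m01| = ‖∫ a, (z a - x n a) ∂m01‖ :=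
              (Real.norm_eq_abs _).symm
          _ ≤ ∫ a, ‖z a - x n a‖ ∂m01 := norm_integral_le_integral_norm _
          _ = ∫ a, |x n a - z a| ∂m01 := by
              congr 1; funext a; rw [Real.norm_eq_abs, abs_sub_comm]
      have h0 : |(∫ a, z a ∂m01) - ∫ a, y a ∂m01| ≤ 0 :=
        ge_of_tendsto hlim' (Filter.Eventually.of_forall hbound)
      exact sub_eq_zero.1 (abs_nonpos_iff.1 h0)
end

section
/- Let x be an integrable real-valued function on (0,∞) and 0 < s < ∞. Suppose a : (0,∞) → [0,1] is measurable with ∫a dm = s and ∫ x₊ · a dm = ∫₀ˢ μ(t; x₊) dt, and suppose the decreasing rearrangement μ(x₊) is not constant on any left neighborhood of s. Then a = χ_{{x₊ > μ(s;x₊)}} almost everywhere. -/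
open MeasureTheory Set

/-- Decreasing rearrangement of `|f|` with respect to Lebesgue measure on `(0,∞)`. -/
noncomputable def rearr (f : ℝ → ℝ) (t : ℝ) : ℝ :=
  sInf {s : ℝ | 0 ≤ s ∧ (volume.restrict (Set.Ioi (0:ℝ))) {x | s < |f x|} ≤ ENNReal.ofReal t}

/-- Positive part of a function. -/
noncomputable def posPart' (f : ℝ → ℝ) : ℝ → ℝ := fun t => max (f t) 0

/-- Negative part of a function. -/
noncomputable def negPart' (f : ℝ → ℝ) : ℝ → ℝ := fun t => max (-f t) 0

/-- Hardy–Littlewood–Pólya submajorization on `(0,∞)`. -/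
def SubMaj (f g : ℝ → ℝ) : Prop :=
  ∀ t : ℝ, 0 ≤ t →
    (∫ s in Set.Ioc (0:ℝ) t, rearr f s) ≤ ∫ s in Set.Ioc (0:ℝ) t, rearr g s

/-- Hardy–Littlewood–Pólya majorization on `(0,∞)`:
`f₊ ≺≺ g₊`, `f₋ ≺≺ g₋` and `∫ f = ∫ g`. -/
def Maj (f g : ℝ → ℝ) : Prop :=
  SubMaj (posPart' f) (posPart' g) ∧ SubMaj (negPart' f) (negPart' g) ∧
    (∫ t in Set.Ioi (0:ℝ), f t) = ∫ t in Set.Ioi (0:ℝ), g t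

open scoped ENNReal

namespace Stmt14Aux

noncomputable def nu : Measure ℝ := volume.restrict (Set.Ioi (0:ℝ))

noncomputable def dd (g : ℝ → ℝ) (r : ℝ) : ℝ≥0∞ := nu {t | r < g t}

def SS (g : ℝ → ℝ) (t : ℝ) : Set ℝ := {r : ℝ | 0 ≤ r ∧ dd g r ≤ ENNReal.ofReal t}

lemma rearr_eq (g : ℝ → ℝ) (hg : ∀ t, 0 ≤ g t) (t : ℝ) :
    rearr g t = sInf (SS g t) := by
  have h : ∀ x, |g x| = g x := fun x => abs_of_nonneg (hg x)
  unfold rearr SS dd nu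
  simp only [h]

lemma dd_antitone (g : ℝ → ℝ) : Antitone (dd g) := fun r r' h =>
  measure_mono fun t ht => lt_of_le_of_lt h ht

lemma SS_bddBelow (g : ℝ → ℝ) (t : ℝ) : BddBelow (SS g t) := ⟨0, fun r hr => hr.1⟩

lemma dd_right_continuous (g : ℝ → ℝ) (r : ℝ) :
    dd g r = ⨆ n : ℕ, dd g (r + 1/(n+1)) := by
  have hmono : Monotone (fun n : ℕ => {t | r + 1/(n+1) < g t}) := by
    intro m n hmn t ht
    have h1 : (1:ℝ)/(n+1) ≤ 1/(m+1) := by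
      apply one_div_le_one_div_of_le (by positivity)
      exact_mod_cast by omega
    simp only [Set.mem_setOf_eq] at ht ⊢
    linarith
  have hset : {t | r < g t} = ⋃ n : ℕ, {t | r + 1/(n+1) < g t} := by
    ext t
    simp only [Set.mem_setOf_eq, Set.mem_iUnion]
    constructor
    · intro h
      obtain ⟨n, hn⟩ := exists_nat_one_div_lt (sub_pos.mpr h)
      exact ⟨n, by linarith⟩
    · rintro ⟨n, hn⟩
      have : (0:ℝ) < 1/(n+1) := by positivity
      linarith
  simp only [dd]
  rw [hset, hmono.directed_le.measure_iUnion]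

lemma SS_nonempty (g : ℝ → ℝ) (hg : AEMeasurable g nu)
    (hfin : ∫⁻ t, ENNReal.ofReal (g t) ∂nu ≠ ⊤) {t : ℝ} (ht : 0 < t) :
    (SS g t).Nonempty := by
  set I := ∫⁻ t, ENNReal.ofReal (g t) ∂nu with hI
  set J := I / ENNReal.ofReal t with hJ
  have hJne : J ≠ ⊤ := (ENNReal.div_lt_top hfin (by simpa using ht)).ne
  set r := J.toReal + 1 with hr
  have hr0 : 0 < r := by positivity
  refine ⟨r, le_of_lt hr0, ?_⟩
  have hJr : J ≤ ENNReal.ofReal r := by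
    rw [← ENNReal.ofReal_toReal hJne]
    exact ENNReal.ofReal_le_ofReal (by simp [hr])
  have markov : dd g r ≤ I / ENNReal.ofReal r := by
    refine le_trans (measure_mono ?_) (meas_ge_le_lintegral_div (ε := ENNReal.ofReal r) hg.ennreal_ofReal (by simp [hr0]) (by simp))
    intro x hx
    exact ENNReal.ofReal_le_ofReal (le_of_lt hx)
  refine le_trans markov ?_
  have hIeq : I = J * ENNReal.ofReal t := by
    rw [hJ, ENNReal.div_mul_cancel (by simp [ht]) (by simp)]
  rw [hIeq]
  calc J * ENNReal.ofReal t / ENNReal.ofReal r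
      ≤ ENNReal.ofReal r * ENNReal.ofReal t / ENNReal.ofReal r := by
        gcongr
    _ = ENNReal.ofReal t := by
        rw [mul_comm, mul_div_assoc, ENNReal.div_self (by simp [hr0]) (by simp), mul_one]

lemma rearr_nonneg (g : ℝ → ℝ) (hg : ∀ t, 0 ≤ g t) (t : ℝ) : 0 ≤ rearr g t := by
  rw [rearr_eq g hg]
  exact Real.sInf_nonneg fun x hx => hx.1

lemma rearr_anti (g : ℝ → ℝ) (hgnn : ∀ t, 0 ≤ g t) (hg : AEMeasurable g nu)
    (hfin : ∫⁻ t, ENNReal.ofReal (g t) ∂nu ≠ ⊤) :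
    AntitoneOn (rearr g) (Set.Ioi (0:ℝ)) := by
  intro t ht t' _ htt'
  rw [rearr_eq g hgnn, rearr_eq g hgnn]
  refine csInf_le_csInf (SS_bddBelow g t') (SS_nonempty g hg hfin ht) ?_
  intro r hr
  exact ⟨hr.1, le_trans hr.2 (ENNReal.ofReal_le_ofReal htt')⟩

lemma dd_rearr_le (g : ℝ → ℝ) (hgnn : ∀ t, 0 ≤ g t) (hg : AEMeasurable g nu)
    (hfin : ∫⁻ t, ENNReal.ofReal (g t) ∂nu ≠ ⊤) {t : ℝ} (ht : 0 < t) :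
    dd g (rearr g t) ≤ ENNReal.ofReal t := by
  rw [dd_right_continuous]
  refine iSup_le fun n => ?_
  have hlt : sInf (SS g t) < rearr g t + 1/(n+1) := by
    rw [← rearr_eq g hgnn]
    have : (0:ℝ) < 1/(n+1) := by positivity
    linarith
  obtain ⟨r, hrS, hrlt⟩ := exists_lt_of_csInf_lt (SS_nonempty g hg hfin ht) hlt
  exact le_trans (dd_antitone g (le_of_lt hrlt)) hrS.2

lemma lt_rearr_iff (g : ℝ → ℝ) (hgnn : ∀ t, 0 ≤ g t) (hg : AEMeasurable g nu)
    (hfin : ∫⁻ t, ENNReal.ofReal (g t) ∂nu ≠ ⊤) {u t : ℝ} (hu : 0 ≤ u) (ht : 0 < t) :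
    u < rearr g t ↔ ENNReal.ofReal t < dd g u := by
  constructor
  · intro h
    by_contra hc
    push_neg at hc
    have : rearr g t ≤ u := by
      rw [rearr_eq g hgnn]
      exact csInf_le (SS_bddBelow g t) ⟨hu, hc⟩
    linarith
  · intro h
    by_contra hc
    push_neg at hc
    exact absurd (le_trans (dd_antitone g hc) (dd_rearr_le g hgnn hg hfin ht)) (not_le.mpr h)

lemma equimeas_level (g : ℝ → ℝ) (hgnn : ∀ t, 0 ≤ g t) (hg : AEMeasurable g nu)
    (hfin : ∫⁻ t, ENNReal.ofReal (g t) ∂nu ≠ ⊤) {u : ℝ} (hu : 0 ≤ u) :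
    nu {t | u < rearr g t} = dd g u := by
  simp only [nu]
  rw [Measure.restrict_apply' measurableSet_Ioi]
  by_cases hdd : dd g u = ⊤
  · have hset : {t | u < rearr g t} ∩ Set.Ioi 0 = Set.Ioi 0 := by
      apply Set.inter_eq_right.mpr
      intro t ht
      simp only [Set.mem_setOf_eq]
      rw [lt_rearr_iff g hgnn hg hfin hu ht, hdd]
      exact ENNReal.ofReal_lt_top
    rw [hset, Real.volume_Ioi, hdd]
  · have hset : {t | u < rearr g t} ∩ Set.Ioi 0 = Set.Ioo 0 ((dd g u).toReal) := by
      ext t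
      simp only [Set.mem_inter_iff, Set.mem_setOf_eq, Set.mem_Ioi, Set.mem_Ioo]
      constructor
      · rintro ⟨h1, h2⟩
        refine ⟨h2, ?_⟩
        rw [lt_rearr_iff g hgnn hg hfin hu h2] at h1
        exact (ENNReal.ofReal_lt_iff_lt_toReal (le_of_lt h2) hdd).mp h1
      · rintro ⟨h1, h2⟩
        refine ⟨?_, h1⟩
        rw [lt_rearr_iff g hgnn hg hfin hu h1]
        exact (ENNReal.ofReal_lt_iff_lt_toReal (le_of_lt h1) hdd).mpr h2
    rw [hset, Real.volume_Ioo, sub_zero, ENNReal.ofReal_toReal hdd]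


lemma rearr_aemeasurable (g : ℝ → ℝ) (hgnn : ∀ t, 0 ≤ g t) (hg : AEMeasurable g nu)
    (hfin : ∫⁻ t, ENNReal.ofReal (g t) ∂nu ≠ ⊤) : AEMeasurable (rearr g) nu := by
  unfold nu
  exact aemeasurable_restrict_of_antitoneOn measurableSet_Ioi (rearr_anti g hgnn hg hfin)

lemma lintegral_rearr (g : ℝ → ℝ) (hgnn : ∀ t, 0 ≤ g t) (hg : AEMeasurable g nu)
    (hfin : ∫⁻ t, ENNReal.ofReal (g t) ∂nu ≠ ⊤) :
    ∫⁻ t, ENNReal.ofReal (rearr g t) ∂nu = ∫⁻ t, ENNReal.ofReal (g t) ∂nu := by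
  rw [lintegral_eq_lintegral_meas_lt nu (Filter.Eventually.of_forall (rearr_nonneg g hgnn))
      (rearr_aemeasurable g hgnn hg hfin),
    lintegral_eq_lintegral_meas_lt nu (Filter.Eventually.of_forall hgnn) hg]
  apply setLIntegral_congr_fun measurableSet_Ioi
  intro u hu
  exact equimeas_level g hgnn hg hfin (le_of_lt hu)

lemma lintegral_shift (g : ℝ → ℝ) (hgnn : ∀ t, 0 ≤ g t) (hg : AEMeasurable g nu)
    (hfin : ∫⁻ t, ENNReal.ofReal (g t) ∂nu ≠ ⊤) {β : ℝ} (hβ : 0 ≤ β) :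
    ∫⁻ t, ENNReal.ofReal (max (g t - β) 0) ∂nu
      = ∫⁻ t, ENNReal.ofReal (max (rearr g t - β) 0) ∂nu := by
  rw [lintegral_eq_lintegral_meas_lt (f := fun t => max (g t - β) 0) nu
      (Filter.Eventually.of_forall (fun t => le_max_right _ _))
      ((hg.sub aemeasurable_const).max aemeasurable_const),
    lintegral_eq_lintegral_meas_lt (f := fun t => max (rearr g t - β) 0) nu
      (Filter.Eventually.of_forall (fun t => le_max_right _ _))
      (((rearr_aemeasurable g hgnn hg hfin).sub aemeasurable_const).max aemeasurable_const)]
  apply setLIntegral_congr_fun measurableSet_Ioi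
  intro u hu
  have hu' : (0:ℝ) < u := hu
  have h1 : {t | u < max (g t - β) 0} = {t | β + u < g t} := by
    ext t
    simp only [Set.mem_setOf_eq, lt_max_iff]
    constructor
    · rintro (h | h) <;> linarith
    · intro h; left; linarith
  have h2 : {t | u < max (rearr g t - β) 0} = {t | β + u < rearr g t} := by
    ext t
    simp only [Set.mem_setOf_eq, lt_max_iff]
    constructor
    · rintro (h | h) <;> linarith
    · intro h; left; linarith
  beta_reduce
  rw [h1, h2]
  exact (equimeas_level g hgnn hg hfin (u := β + u) (by positivity)).symm

end Stmt14Aux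

open Stmt14Aux

/-- If a weight `a` with `0 ≤ a ≤ 1`, `∫ a = s` attains
`∫ x₊·a = ∫₀ˢ μ(t;x₊) dt` and `μ(x₊)` is not constant on any left neighborhood of `s`,
then `a` is (a.e.) the indicator of the super-level set `{x₊ > μ(s;x₊)}`. -/
theorem stmt14 (x : ℝ → ℝ) (hx : IntegrableOn x (Set.Ioi 0)) (s : ℝ) (hs : 0 < s)
    (a : ℝ → ℝ) (ha : Measurable a) (ha01 : ∀ t, a t ∈ Set.Icc (0:ℝ) 1)
    (haint : (∫ t in Set.Ioi (0:ℝ), a t) = s)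
    (hopt : (∫ t in Set.Ioi (0:ℝ), max (x t) 0 * a t) =
      ∫ t in Set.Ioc (0:ℝ) s, rearr (posPart' x) t)
    (hnc : ∀ ε : ℝ, 0 < ε → ∃ t₁ ∈ Set.Ioc (s - ε) s, ∃ t₂ ∈ Set.Ioc (s - ε) s,
      rearr (posPart' x) t₁ ≠ rearr (posPart' x) t₂) :
    ∀ᵐ t ∂(volume.restrict (Set.Ioi (0:ℝ))),
      a t = if rearr (posPart' x) s < max (x t) 0 then 1 else 0 := by
  classical
  have hxa : AEStronglyMeasurable x (volume.restrict (Set.Ioi (0:ℝ))) :=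
    hx.aestronglyMeasurable
  have hx'meas : Measurable (hxa.mk x) := hxa.stronglyMeasurable_mk.measurable
  have hxx' : x =ᵐ[volume.restrict (Set.Ioi (0:ℝ))] hxa.mk x := hxa.ae_eq_mk
  set g : ℝ → ℝ := fun t => max (hxa.mk x t) 0 with hgdef
  have hgmeas : Measurable g := hx'meas.max measurable_const
  have hgnn : ∀ t, 0 ≤ g t := fun t => le_max_right _ _
  have hgae : (fun t => max (x t) 0) =ᵐ[volume.restrict (Set.Ioi (0:ℝ))] g := by
    filter_upwards [hxx'] with t ht
    simp only [hgdef, ht]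
  have hrearr : rearr (posPart' x) = rearr g := by
    have hMeq : ∀ r : ℝ, (volume.restrict (Set.Ioi (0:ℝ))) {y | r < |posPart' x y|}
        = (volume.restrict (Set.Ioi (0:ℝ))) {y | r < |g y|} := by
      intro r
      apply measure_congr
      filter_upwards [hgae] with y hy
      show (r < |posPart' x y|) = (r < |g y|)
      rw [show posPart' x y = g y from hy]
    funext t
    unfold rearr
    congr 1
    ext r
    simp only [Set.mem_setOf_eq, hMeq r]
  have hgint : Integrable g (volume.restrict (Set.Ioi (0:ℝ))) :=
    (hx.congr hxx').pos_part
  have hfin : ∫⁻ t, ENNReal.ofReal (g t) ∂(volume.restrict (Set.Ioi (0:ℝ))) ≠ ⊤ :=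
    hgint.lintegral_lt_top.ne
  have hgaem : AEMeasurable g (volume.restrict (Set.Ioi (0:ℝ))) := hgmeas.aemeasurable
  set β := rearr g s with hβdef
  have hβ0 : 0 ≤ β := rearr_nonneg g hgnn s
  have hanti : AntitoneOn (rearr g) (Set.Ioi 0) := rearr_anti g hgnn hgaem hfin
  have haInt : Integrable a (volume.restrict (Set.Ioi (0:ℝ))) := by
    by_contra h
    rw [integral_undef h] at haint
    linarith
  have hga_int : Integrable (fun t => g t * a t) (volume.restrict (Set.Ioi (0:ℝ))) := by
    apply Integrable.mono' hgint ((hgmeas.mul ha).aestronglyMeasurable)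
    filter_upwards with t
    rw [Real.norm_eq_abs, Pi.mul_apply, abs_mul, abs_of_nonneg (hgnn t), abs_of_nonneg (ha01 t).1]
    nlinarith [(ha01 t).2, hgnn t, (ha01 t).1]
  have hopt' : (∫ t, g t * a t ∂(volume.restrict (Set.Ioi (0:ℝ))))
      = ∫ t in Set.Ioc (0:ℝ) s, rearr g t := by
    have h1 : (∫ t in Set.Ioi (0:ℝ), max (x t) 0 * a t)
        = ∫ t, g t * a t ∂(volume.restrict (Set.Ioi (0:ℝ))) := by
      apply integral_congr_ae
      filter_upwards [hgae] with t ht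
      rw [ht]
    rw [← h1, hopt, hrearr]
  have hm_aem : AEMeasurable (rearr g) (volume.restrict (Set.Ioi (0:ℝ))) :=
    rearr_aemeasurable g hgnn hgaem hfin
  have hmnn : ∀ t, 0 ≤ rearr g t := rearr_nonneg g hgnn
  have hmint : Integrable (rearr g) (volume.restrict (Set.Ioi (0:ℝ))) := by
    refine ⟨hm_aem.aestronglyMeasurable, ?_⟩
    rw [hasFiniteIntegral_iff_ofReal (Filter.Eventually.of_forall hmnn)]
    have hl : ∫⁻ t, ENNReal.ofReal (rearr g t) ∂(volume.restrict (Set.Ioi (0:ℝ)))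
        = ∫⁻ t, ENNReal.ofReal (g t) ∂(volume.restrict (Set.Ioi (0:ℝ))) :=
      lintegral_rearr g hgnn hgaem hfin
    rw [hl]
    exact hgint.lintegral_lt_top
  have hφint : Integrable (fun t => max (g t - β) 0) (volume.restrict (Set.Ioi (0:ℝ))) := by
    apply Integrable.mono' hgint ((hgmeas.sub measurable_const).max measurable_const).aestronglyMeasurable
    filter_upwards with t
    rw [Real.norm_eq_abs, abs_of_nonneg (le_max_right _ _)]
    exact max_le (by simp only [Pi.sub_apply]; linarith [hgnn t, rearr_nonneg g hgnn s]) (hgnn t)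
  have hψint : Integrable (fun t => (g t - β) * a t) (volume.restrict (Set.Ioi (0:ℝ))) := by
    have he : (fun t => (g t - β) * a t) = fun t => g t * a t - β * a t := by
      funext t; ring
    rw [he]
    exact hga_int.sub (haInt.const_mul β)
  have hmφint : Integrable (fun t => max (rearr g t - β) 0)
      (volume.restrict (Set.Ioi (0:ℝ))) := by
    apply Integrable.mono' hmint
      (((hm_aem.sub aemeasurable_const).max aemeasurable_const).aestronglyMeasurable)
    filter_upwards with t
    rw [Real.norm_eq_abs, abs_of_nonneg (le_max_right _ _)]
    exact max_le (by simp only [Pi.sub_apply]; linarith [hmnn t, hmnn s]) (hmnn t)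
  have hC : (∫ t, max (g t - β) 0 ∂(volume.restrict (Set.Ioi (0:ℝ))))
      = ∫ t, max (rearr g t - β) 0 ∂(volume.restrict (Set.Ioi (0:ℝ))) := by
    rw [integral_eq_lintegral_of_nonneg_ae (f := fun t => max (g t - β) 0)
        (Filter.Eventually.of_forall fun t => le_max_right _ _) hφint.aestronglyMeasurable,
      integral_eq_lintegral_of_nonneg_ae (f := fun t => max (rearr g t - β) 0)
        (Filter.Eventually.of_forall fun t => le_max_right _ _) hmφint.aestronglyMeasurable]
    congr 1
    exact lintegral_shift g hgnn hgaem hfin hβ0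
  have hD : (∫ t, max (rearr g t - β) 0 ∂(volume.restrict (Set.Ioi (0:ℝ))))
      = (∫ t in Set.Ioc (0:ℝ) s, rearr g t) - β * s := by
    have h0 : (∫ t in Set.Ioi s, max (rearr g t - β) 0) = 0 := by
      rw [setIntegral_congr_fun measurableSet_Ioi
        (show Set.EqOn (fun t => max (rearr g t - β) 0) (fun _ => (0:ℝ)) (Set.Ioi s) by
          intro t ht
          have : rearr g t ≤ β := hanti (Set.mem_Ioi.mpr hs) (Set.mem_Ioi.mpr (lt_trans hs ht))
            (le_of_lt ht)
          simp only [max_eq_right (by linarith : rearr g t - β ≤ 0)])]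
      exact integral_zero _ _
    have h1 : (∫ t in Set.Ioc (0:ℝ) s, max (rearr g t - β) 0)
        = (∫ t in Set.Ioc (0:ℝ) s, rearr g t) - β * s := by
      rw [setIntegral_congr_fun measurableSet_Ioc
        (show Set.EqOn (fun t => max (rearr g t - β) 0) (fun t => rearr g t - β)
            (Set.Ioc (0:ℝ) s) by
          intro t ht
          have : β ≤ rearr g t := hanti (Set.mem_Ioi.mpr ht.1) (Set.mem_Ioi.mpr hs) ht.2
          simp only [max_eq_left (by linarith : (0:ℝ) ≤ rearr g t - β)]),
        integral_sub (hmint.mono_measure (Measure.restrict_mono Set.Ioc_subset_Ioi_self le_rfl))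
          (integrableOn_const (by rw [Real.volume_Ioc]; exact ENNReal.ofReal_ne_top)),
        setIntegral_const, measureReal_def, Real.volume_Ioc, ENNReal.toReal_ofReal (by linarith), smul_eq_mul]
      ring
    have hsplit : Set.Ioc (0:ℝ) s ∪ Set.Ioi s = Set.Ioi (0:ℝ) :=
      Set.Ioc_union_Ioi_eq_Ioi (le_of_lt hs)
    have h2 : (∫ t, max (rearr g t - β) 0 ∂(volume.restrict (Set.Ioi (0:ℝ))))
        = (∫ t in Set.Ioc (0:ℝ) s, max (rearr g t - β) 0)
          + ∫ t in Set.Ioi s, max (rearr g t - β) 0 := by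
      rw [← hsplit]
      exact setIntegral_union (Set.Ioc_disjoint_Ioi le_rfl) measurableSet_Ioi
        (hmφint.mono_measure (Measure.restrict_mono (by rw [← hsplit]; exact Set.subset_union_left) le_rfl))
        (hmφint.mono_measure (Measure.restrict_mono (by rw [← hsplit]; exact Set.subset_union_right) le_rfl))
    rw [h2, h0, h1]
    ring
  have hA : (∫ t, g t * a t ∂(volume.restrict (Set.Ioi (0:ℝ))))
      = (∫ t, (g t - β) * a t ∂(volume.restrict (Set.Ioi (0:ℝ)))) + β * s := by
    have h3 : (∫ t, g t * a t ∂(volume.restrict (Set.Ioi (0:ℝ))))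
        = ∫ t, ((g t - β) * a t + β * a t) ∂(volume.restrict (Set.Ioi (0:ℝ))) := by
      apply integral_congr_ae
      filter_upwards with t
      ring
    rw [h3, integral_add hψint (haInt.const_mul β), integral_const_mul, haint]
  have hψφ : (fun t => (g t - β) * a t)
      =ᵐ[volume.restrict (Set.Ioi (0:ℝ))] fun t => max (g t - β) 0 := by
    have hle : ∀ t, (g t - β) * a t ≤ max (g t - β) 0 := by
      intro t
      rcases le_or_gt (g t - β) 0 with h | h
      · have : (g t - β) * a t ≤ 0 := mul_nonpos_of_nonpos_of_nonneg h (ha01 t).1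
        exact le_trans this (le_max_right _ _)
      · have : (g t - β) * a t ≤ (g t - β) * 1 := by
          apply mul_le_mul_of_nonneg_left (ha01 t).2 (le_of_lt h)
        rw [mul_one] at this
        exact le_trans this (le_max_left _ _)
    have hint : Integrable (fun t => max (g t - β) 0 - (g t - β) * a t)
        (volume.restrict (Set.Ioi (0:ℝ))) := hφint.sub hψint
    have hzero : (∫ t, (max (g t - β) 0 - (g t - β) * a t)
        ∂(volume.restrict (Set.Ioi (0:ℝ)))) = 0 := by
      rw [integral_sub hφint hψint]
      linarith [hA, hC, hD, hopt']
    have h4 := (integral_eq_zero_iff_of_nonneg_ae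
      (Filter.Eventually.of_forall fun t => sub_nonneg.mpr (hle t)) hint).mp hzero
    filter_upwards [h4] with t ht
    have ht' : max (g t - β) 0 - (g t - β) * a t = 0 := ht
    linarith
  have ha1E : ∀ᵐ t ∂(volume.restrict (Set.Ioi (0:ℝ))), β < g t → a t = 1 := by
    filter_upwards [hψφ] with t ht hlt
    rw [max_eq_left (by linarith : (0:ℝ) ≤ g t - β)] at ht
    have hne : g t - β ≠ 0 := ne_of_gt (sub_pos.mpr hlt)
    exact mul_left_cancel₀ hne (ht.trans (mul_one _).symm)
  have hEmeas : MeasurableSet {t : ℝ | β < g t} :=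
    measurableSet_lt measurable_const hgmeas
  have hEge : ENNReal.ofReal s ≤ (volume.restrict (Set.Ioi (0:ℝ))) {t : ℝ | β < g t} := by
    show ENNReal.ofReal s ≤ dd g β
    by_contra hc
    push_neg at hc
    have hfin2 : dd g β ≠ ⊤ := (lt_of_lt_of_le hc le_top).ne
    set d := (dd g β).toReal with hd
    have hd0 : 0 ≤ d := ENNReal.toReal_nonneg
    have hds : d < s := by
      have h5 := (ENNReal.toReal_lt_toReal hfin2 ENNReal.ofReal_ne_top).mpr hc
      rwa [ENNReal.toReal_ofReal (le_of_lt hs)] at h5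
    set ε := (s - d)/2 with hεdef
    have hε : 0 < ε := by simp only [hεdef]; linarith
    obtain ⟨t₁, ht₁, t₂, ht₂, hne⟩ := hnc ε hε
    rw [hrearr] at hne
    have hσ : 0 < s - ε := by simp only [hεdef]; linarith
    have hp1 : 0 < t₁ := lt_of_lt_of_le hσ (le_of_lt ht₁.1)
    have hp2 : 0 < t₂ := lt_of_lt_of_le hσ (le_of_lt ht₂.1)
    have hb1 : β ≤ rearr g t₁ := hanti (Set.mem_Ioi.mpr hp1) (Set.mem_Ioi.mpr hs) ht₁.2
    have hb2 : β ≤ rearr g t₂ := hanti (Set.mem_Ioi.mpr hp2) (Set.mem_Ioi.mpr hs) ht₂.2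
    have hex : ∃ t, (s - ε < t ∧ 0 < t) ∧ β < rearr g t := by
      rcases lt_or_gt_of_ne hne with h | h
      · exact ⟨t₂, ⟨ht₂.1, hp2⟩, lt_of_le_of_lt hb1 h⟩
      · exact ⟨t₁, ⟨ht₁.1, hp1⟩, lt_of_le_of_lt hb2 h⟩
    obtain ⟨t, ⟨htσ, htpos⟩, htβ⟩ := hex
    have h6 := (lt_rearr_iff g hgnn hgaem hfin hβ0 htpos).mp htβ
    have h7 : dd g β = ENNReal.ofReal d := (ENNReal.ofReal_toReal hfin2).symm
    rw [h7] at h6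
    have h8 : t < d := by
      have := (ENNReal.ofReal_lt_ofReal_iff_of_nonneg (le_of_lt htpos)).mp h6
      exact this
    simp only [hεdef] at htσ
    linarith
  have ha1resE : a =ᵐ[(volume.restrict (Set.Ioi (0:ℝ))).restrict {t : ℝ | β < g t}]
      fun _ => (1:ℝ) := by
    rw [Filter.EventuallyEq, ae_restrict_iff' hEmeas]
    filter_upwards [ha1E] with t h1 hE
    exact h1 hE
  have hEfin : (volume.restrict (Set.Ioi (0:ℝ))) {t : ℝ | β < g t} < ⊤ := by
    have h1 : Integrable (fun _ => (1:ℝ))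
        ((volume.restrict (Set.Ioi (0:ℝ))).restrict {t : ℝ | β < g t}) :=
      haInt.restrict.congr ha1resE
    rcases integrable_const_iff.mp h1 with h | h
    · norm_num at h
    · have h' := h.measure_univ_lt_top
      rwa [Measure.restrict_apply_univ] at h'
  have hIa_E : (∫ t in {t : ℝ | β < g t}, a t ∂(volume.restrict (Set.Ioi (0:ℝ))))
      = ((volume.restrict (Set.Ioi (0:ℝ))) {t : ℝ | β < g t}).toReal := by
    rw [integral_congr_ae ha1resE, setIntegral_const, smul_eq_mul, mul_one, measureReal_def]
  have hle_s : ((volume.restrict (Set.Ioi (0:ℝ))) {t : ℝ | β < g t}).toReal ≤ s := by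
    rw [← hIa_E, ← haint]
    exact setIntegral_le_integral haInt (Filter.Eventually.of_forall fun t => (ha01 t).1)
  have hEeq : ((volume.restrict (Set.Ioi (0:ℝ))) {t : ℝ | β < g t}).toReal = s := by
    refine le_antisymm hle_s ?_
    have := ENNReal.toReal_le_toReal ENNReal.ofReal_ne_top hEfin.ne |>.mpr hEge
    rwa [ENNReal.toReal_ofReal (le_of_lt hs)] at this
  have hcompl : (∫ t in {t : ℝ | β < g t}ᶜ, a t ∂(volume.restrict (Set.Ioi (0:ℝ)))) = 0 := by
    have h9 := integral_add_compl hEmeas haInt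
    rw [hIa_E, hEeq] at h9
    rw [haint] at h9
    linarith
  have ha0 : ∀ᵐ t ∂(volume.restrict (Set.Ioi (0:ℝ))), ¬ (β < g t) → a t = 0 := by
    have h1 : a =ᵐ[(volume.restrict (Set.Ioi (0:ℝ))).restrict {t : ℝ | β < g t}ᶜ] 0 :=
      (integral_eq_zero_iff_of_nonneg_ae
        (Filter.Eventually.of_forall fun t => (ha01 t).1) haInt.restrict).mp hcompl
    rw [Filter.EventuallyEq, ae_restrict_iff' hEmeas.compl] at h1
    filter_upwards [h1] with t ht hnb
    exact ht hnb
  rw [hrearr]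
  filter_upwards [ha1E, ha0, hgae] with t h1 h0 hg'
  rw [hg']
  by_cases hb : β < g t
  · rw [if_pos hb]
    exact h1 hb
  · rw [if_neg hb]
    exact h0 hb
end

section
/- Let x, x₁, x₂ be integrable real-valued functions on a measure space with x = (x₁ + x₂)/2. If the decreasing rearrangements satisfy μ((x₁)₊) = μ((x₂)₊) = μ(x₊) and μ((x₁)₋) = μ((x₂)₋) = μ(x₋), then x = x₁ = x₂ almost everywhere. -/
open MeasureTheory Set

/-- Decreasing rearrangement of `|f|` with respect to a measure `ν`. -/
noncomputable def rearrM {α : Type*} [MeasurableSpace α] (ν : Measure α) (f : α → ℝ)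
    (t : ℝ) : ℝ :=
  sInf {s : ℝ | 0 ≤ s ∧ ν {p | s < |f p|} ≤ ENNReal.ofReal t}

section Aux

open scoped ENNReal

variable {X : Type*} [MeasurableSpace X] {ν : Measure X}

lemma lint_abs_ne_top {f : X → ℝ} (hf : Integrable f ν) :
    ∫⁻ p, ENNReal.ofReal |f p| ∂ν ≠ ∞ := by
  simpa [← ofReal_norm_eq_enorm, Real.norm_eq_abs] using hf.2.ne

lemma markov_abs {f : X → ℝ} (hf : Integrable f ν) {u : ℝ} (hu : 0 < u) :
    ν {p | u < |f p|} ≤ (∫⁻ p, ENNReal.ofReal |f p| ∂ν) / ENNReal.ofReal u := by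
  refine le_trans (measure_mono fun p hp => ?_)
    (meas_ge_le_lintegral_div hf.abs.aemeasurable.ennreal_ofReal
      (by simp [hu]) ENNReal.ofReal_ne_top)
  exact ENNReal.ofReal_le_ofReal (le_of_lt hp)

lemma rearr_set_nonempty {f : X → ℝ} (hf : Integrable f ν) {t : ℝ} (ht : 0 < t) :
    {s : ℝ | 0 ≤ s ∧ ν {p | s < |f p|} ≤ ENNReal.ofReal t}.Nonempty := by
  set I := ∫⁻ p, ENNReal.ofReal |f p| ∂ν with hI
  have hIne : I ≠ ∞ := lint_abs_ne_top hf
  set s : ℝ := (I / ENNReal.ofReal t).toReal + 1 with hs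
  have hdiv_ne : I / ENNReal.ofReal t ≠ ∞ :=
    (ENNReal.div_lt_top hIne (by simp [ht])).ne
  have hs0 : 0 < s := by positivity
  refine ⟨s, hs0.le, ?_⟩
  have h1 : ν {p | s < |f p|} ≤ I / ENNReal.ofReal s := markov_abs hf hs0
  refine h1.trans ?_
  rw [ENNReal.div_le_iff (by simp [hs0]) ENNReal.ofReal_ne_top]
  have h2 : I / ENNReal.ofReal t ≤ ENNReal.ofReal s := by
    rw [← ENNReal.ofReal_toReal hdiv_ne]
    exact ENNReal.ofReal_le_ofReal (by simp [hs])
  calc I = (I / ENNReal.ofReal t) * ENNReal.ofReal t := by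
        rw [ENNReal.div_mul_cancel (by simp [ht]) ENNReal.ofReal_ne_top]
    _ ≤ ENNReal.ofReal s * ENNReal.ofReal t := mul_le_mul_left h2 _
    _ = ENNReal.ofReal t * ENNReal.ofReal s := mul_comm _ _

lemma rearr_le_iff {f : X → ℝ} (hf : Integrable f ν) {t u : ℝ} (ht : 0 < t) (hu : 0 ≤ u) :
    rearrM ν f t ≤ u ↔ ν {p | u < |f p|} ≤ ENNReal.ofReal t := by
  set S := {s : ℝ | 0 ≤ s ∧ ν {p | s < |f p|} ≤ ENNReal.ofReal t} with hS
  have hbdd : BddBelow S := ⟨0, fun s hs => hs.1⟩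
  have hne : S.Nonempty := rearr_set_nonempty hf ht
  constructor
  · intro h
    have key : ∀ ε : ℝ, 0 < ε → ν {p | u + ε < |f p|} ≤ ENNReal.ofReal t := by
      intro ε hε
      obtain ⟨s, hsS, hslt⟩ := exists_lt_of_csInf_lt hne
        (lt_of_le_of_lt h (lt_add_of_pos_right u hε))
      exact le_trans (measure_mono fun p hp => lt_trans hslt hp) hsS.2
    have hset : {p | u < |f p|} = ⋃ n : ℕ, {p | u + 1 / (n + 1) < |f p|} := by
      ext p
      simp only [mem_setOf_eq, mem_iUnion]
      constructor
      · intro hp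
        obtain ⟨n, hn⟩ := exists_nat_one_div_lt (sub_pos.mpr hp)
        exact ⟨n, by linarith⟩
      · rintro ⟨n, hn⟩
        have : (0:ℝ) < 1 / (n + 1) := by positivity
        linarith
    rw [hset]
    have hmono : Monotone fun n : ℕ => {p | u + 1 / ((n:ℝ) + 1) < |f p|} := by
      intro m n hmn p hp
      have : (1:ℝ) / (n + 1) ≤ 1 / (m + 1) := by
        apply one_div_le_one_div_of_le (by positivity)
        exact_mod_cast by omega
      simp only [mem_setOf_eq] at hp ⊢
      linarith
    rw [hmono.directed_le.measure_iUnion]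
    exact iSup_le fun n => key _ (by positivity)
  · intro h
    exact csInf_le hbdd ⟨hu, h⟩

lemma dist_lt_top {f : X → ℝ} (hf : Integrable f ν) {u : ℝ} (hu : 0 < u) :
    ν {p | u < |f p|} ≠ ∞ :=
  ((markov_abs hf hu).trans_lt
    (ENNReal.div_lt_top (lint_abs_ne_top hf) (by simp [hu]))).ne

lemma dist_eq_of_rearr_eq {f g : X → ℝ} (hf : Integrable f ν) (hg : Integrable g ν)
    (hr : ∀ t : ℝ, rearrM ν f t = rearrM ν g t) {u : ℝ} (hu : 0 < u) :
    ν {p | u < |f p|} = ν {p | u < |g p|} := by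
  have key : ∀ (f g : X → ℝ), Integrable f ν → Integrable g ν →
      (∀ t : ℝ, 0 < t → rearrM ν g t ≤ u → rearrM ν f t ≤ u) →
      ν {p | u < |f p|} ≤ ν {p | u < |g p|} := by
    intro f g hf hg hfg
    apply ENNReal.le_of_forall_pos_le_add
    intro ε hε _
    have hgne : ν {p | u < |g p|} ≠ ∞ := dist_lt_top hg hu
    set t : ℝ := (ν {p | u < |g p|} + (ε : ℝ≥0∞)).toReal with htdef
    have hsum_ne : ν {p | u < |g p|} + (ε : ℝ≥0∞) ≠ ∞ := by simp [hgne]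
    have ht : 0 < t := by
      rw [htdef]
      apply ENNReal.toReal_pos _ hsum_ne
      simp [hε.ne']
    have hofReal : ENNReal.ofReal t = ν {p | u < |g p|} + (ε : ℝ≥0∞) := by
      rw [htdef, ENNReal.ofReal_toReal hsum_ne]
    have hgle : rearrM ν g t ≤ u := by
      rw [rearr_le_iff hg ht hu.le, hofReal]
      exact le_self_add
    have := (rearr_le_iff hf ht hu.le).mp (hfg t ht hgle)
    rwa [hofReal] at this
  refine le_antisymm (key f g hf hg fun t ht h => ?_) (key g f hg hf fun t ht h => ?_)
  · rw [hr]; exact h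
  · rw [← hr]; exact h

lemma lint_pos_part_eq (f : X → ℝ) (hf : AEMeasurable f ν) (c : ℝ) :
    ∫⁻ ω, ENNReal.ofReal (max (f ω - c) 0) ∂ν
      = ∫⁻ t in Ioi (0:ℝ), ν {a | c + t < f a} := by
  rw [lintegral_eq_lintegral_meas_lt (f := fun ω => max (f ω - c) 0) ν
    (ae_of_all _ fun ω => le_max_right _ _)
    ((hf.sub aemeasurable_const).max aemeasurable_const)]
  apply lintegral_congr_ae
  refine (ae_restrict_iff' measurableSet_Ioi).mpr (ae_of_all _ fun t ht => ?_)
  rw [mem_Ioi] at ht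
  have hst : {a | t < max (f a - c) 0} = {a | c + t < f a} := by
    ext p
    simp only [mem_setOf_eq, lt_max_iff]
    constructor
    · rintro (h | h)
      · linarith
      · linarith
    · intro h; left; linarith
  show ν {a | t < max (f a - c) 0} = ν {a | c + t < f a}
  rw [hst]

lemma lint_eq_of_dist_eq {f g : X → ℝ} (hf : AEMeasurable f ν) (hg : AEMeasurable g ν)
    (hd : ∀ u : ℝ, 0 < u → ν {p | u < f p} = ν {p | u < g p}) {c : ℝ} (hc : 0 ≤ c) :
    ∫⁻ ω, ENNReal.ofReal (max (f ω - c) 0) ∂ν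
      = ∫⁻ ω, ENNReal.ofReal (max (g ω - c) 0) ∂ν := by
  rw [lint_pos_part_eq f hf c, lint_pos_part_eq g hg c]
  apply lintegral_congr_ae
  refine (ae_restrict_iff' measurableSet_Ioi).mpr (ae_of_all _ fun t ht => ?_)
  rw [mem_Ioi] at ht
  exact hd (c + t) (by linarith)

/-- Middle-point rigidity on positive parts at each level `c ≥ 0`. -/
lemma mid_pos_part_ae {x x₁ x₂ : X → ℝ} (hx : Integrable x ν) (hx₁ : Integrable x₁ ν)
    (hx₂ : Integrable x₂ ν)
    (hmid : x =ᵐ[ν] fun ω => (x₁ ω + x₂ ω) / 2)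
    (hd₁ : ∀ u : ℝ, 0 < u → ν {p | u < x₁ p} = ν {p | u < x p})
    (hd₂ : ∀ u : ℝ, 0 < u → ν {p | u < x₂ p} = ν {p | u < x p})
    {c : ℝ} (hc : 0 ≤ c) :
    ∀ᵐ ω ∂ν, max (x₁ ω - c) 0 + max (x₂ ω - c) 0 = 2 * max (x ω - c) 0 := by
  set Ex := ∫⁻ ω, ENNReal.ofReal (max (x ω - c) 0) ∂ν with hEx
  have hE₁ : ∫⁻ ω, ENNReal.ofReal (max (x₁ ω - c) 0) ∂ν = Ex :=
    lint_eq_of_dist_eq hx₁.aemeasurable hx.aemeasurable hd₁ hc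
  have hE₂ : ∫⁻ ω, ENNReal.ofReal (max (x₂ ω - c) 0) ∂ν = Ex :=
    lint_eq_of_dist_eq hx₂.aemeasurable hx.aemeasurable hd₂ hc
  have hExne : Ex ≠ ∞ := by
    refine ne_top_of_le_ne_top (lint_abs_ne_top hx) (lintegral_mono fun ω => ?_)
    apply ENNReal.ofReal_le_ofReal
    rcases le_or_gt (x ω) c with h | h
    · simpa [max_eq_right (sub_nonpos.mpr h)] using abs_nonneg (x ω)
    · rw [max_eq_left (by linarith)]
      have := le_abs_self (x ω); linarith
  set F : X → ℝ≥0∞ := fun ω => (2 : ℝ≥0∞) * ENNReal.ofReal (max (x ω - c) 0) with hF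
  set G : X → ℝ≥0∞ := fun ω =>
    ENNReal.ofReal (max (x₁ ω - c) 0) + ENNReal.ofReal (max (x₂ ω - c) 0) with hG
  have hFG : F ≤ᵐ[ν] G := by
    filter_upwards [hmid] with ω hω
    have hreal : 2 * max (x ω - c) 0 ≤ max (x₁ ω - c) 0 + max (x₂ ω - c) 0 := by
      rcases le_or_gt (x ω) c with h | h
      · rw [max_eq_right (sub_nonpos.mpr h)]
        have := le_max_right (x₁ ω - c) 0
        have := le_max_right (x₂ ω - c) 0
        linarith
      · rw [max_eq_left (by linarith)]
        have := le_max_left (x₁ ω - c) 0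
        have := le_max_left (x₂ ω - c) 0
        rw [hω]; ring_nf; linarith [le_max_left (x₁ ω - c) 0, le_max_left (x₂ ω - c) 0]
    calc F ω = ENNReal.ofReal (2 * max (x ω - c) 0) := by
          rw [hF, ENNReal.ofReal_mul (by norm_num : (0:ℝ) ≤ 2)]
          norm_num
      _ ≤ ENNReal.ofReal (max (x₁ ω - c) 0 + max (x₂ ω - c) 0) :=
          ENNReal.ofReal_le_ofReal hreal
      _ = G ω := ENNReal.ofReal_add (le_max_right _ _) (le_max_right _ _)
  have hmeas₁ : AEMeasurable (fun ω => ENNReal.ofReal (max (x₁ ω - c) 0)) ν :=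
    ((hx₁.aemeasurable.sub aemeasurable_const).max aemeasurable_const).ennreal_ofReal
  have hmeas₂ : AEMeasurable (fun ω => ENNReal.ofReal (max (x₂ ω - c) 0)) ν :=
    ((hx₂.aemeasurable.sub aemeasurable_const).max aemeasurable_const).ennreal_ofReal
  have hintF : ∫⁻ ω, F ω ∂ν = 2 * Ex := by
    rw [hF, lintegral_const_mul' _ _ (by norm_num)]
  have hintG : ∫⁻ ω, G ω ∂ν = 2 * Ex := by
    rw [hG, lintegral_add_left' hmeas₁, hE₁, hE₂, two_mul]
  have hFne : ∫⁻ ω, F ω ∂ν ≠ ∞ := by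
    rw [hintF]; exact ENNReal.mul_ne_top (by norm_num) hExne
  have hae : F =ᵐ[ν] G :=
    ae_eq_of_ae_le_of_lintegral_le hFG hFne (hmeas₁.add hmeas₂) (by rw [hintF, hintG])
  filter_upwards [hae] with ω hω
  have : ENNReal.ofReal (2 * max (x ω - c) 0)
      = ENNReal.ofReal (max (x₁ ω - c) 0 + max (x₂ ω - c) 0) := by
    rw [ENNReal.ofReal_mul (by norm_num : (0:ℝ) ≤ 2),
      ENNReal.ofReal_add (le_max_right _ _) (le_max_right _ _)]
    simp only [hF, hG] at hω
    rw [show ENNReal.ofReal (2:ℝ) = 2 by norm_num]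
    exact hω
  have h2 := (ENNReal.ofReal_eq_ofReal_iff
    (by positivity) (by positivity)).mp this
  linarith [h2]

end Aux

/-- If `x = (x₁ + x₂)/2` and the rearrangements of positive and negative parts of
`x₁, x₂` all coincide with those of `x`, then `x = x₁ = x₂` a.e. -/
theorem stmt16 {X : Type*} [MeasurableSpace X] (ν : Measure X) [SigmaFinite ν]
    (x x₁ x₂ : X → ℝ) (hx : Integrable x ν) (hx₁ : Integrable x₁ ν)
    (hx₂ : Integrable x₂ ν)
    (hmid : x =ᵐ[ν] fun ω => (x₁ ω + x₂ ω) / 2)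
    (hpos : ∀ t : ℝ,
      rearrM ν (fun ω => max (x₁ ω) 0) t = rearrM ν (fun ω => max (x ω) 0) t ∧
      rearrM ν (fun ω => max (x₂ ω) 0) t = rearrM ν (fun ω => max (x ω) 0) t)
    (hneg : ∀ t : ℝ,
      rearrM ν (fun ω => max (-x₁ ω) 0) t = rearrM ν (fun ω => max (-x ω) 0) t ∧
      rearrM ν (fun ω => max (-x₂ ω) 0) t = rearrM ν (fun ω => max (-x ω) 0) t) :
    x₁ =ᵐ[ν] x ∧ x₂ =ᵐ[ν] x := by
  -- distribution equalities for the functions themselves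
  have hsetid : ∀ (h : X → ℝ) (u : ℝ), 0 < u →
      {p | u < |max (h p) 0|} = {p | u < h p} := by
    intro h u hu
    ext p
    simp only [mem_setOf_eq, abs_of_nonneg (le_max_right (h p) 0), lt_max_iff]
    constructor
    · rintro (h' | h')
      · exact h'
      · linarith
    · intro h'; left; exact h'
  have hd : ∀ (y : X → ℝ), Integrable y ν →
      (∀ t : ℝ, rearrM ν (fun ω => max (y ω) 0) t = rearrM ν (fun ω => max (x ω) 0) t) →
      ∀ u : ℝ, 0 < u → ν {p | u < y p} = ν {p | u < x p} := by
    intro y hy hr u hu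
    have := dist_eq_of_rearr_eq (f := fun ω => max (y ω) 0) (g := fun ω => max (x ω) 0)
      hy.pos_part hx.pos_part hr hu
    rwa [hsetid y u hu, hsetid x u hu] at this
  have hdn : ∀ (y : X → ℝ), Integrable y ν →
      (∀ t : ℝ, rearrM ν (fun ω => max (-y ω) 0) t = rearrM ν (fun ω => max (-x ω) 0) t) →
      ∀ u : ℝ, 0 < u → ν {p | u < -y p} = ν {p | u < -x p} := by
    intro y hy hr u hu
    have := dist_eq_of_rearr_eq (f := fun ω => max (-y ω) 0) (g := fun ω => max (-x ω) 0)
      hy.neg'.pos_part hx.neg'.pos_part hr hu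
    rwa [hsetid (fun p => -y p) u hu, hsetid (fun p => -x p) u hu] at this
  have hmidn : (fun ω => -x ω) =ᵐ[ν] fun ω => (-x₁ ω + -x₂ ω) / 2 := by
    filter_upwards [hmid] with ω hω
    rw [hω]; ring
  -- a.e. statement for every nonnegative rational level
  have hP : ∀ q : ℚ, ∀ᵐ ω ∂ν, 0 ≤ (q:ℝ) →
      (max (x₁ ω - q) 0 + max (x₂ ω - q) 0 = 2 * max (x ω - q) 0 ∧
       max (-x₁ ω - q) 0 + max (-x₂ ω - q) 0 = 2 * max (-x ω - q) 0) := by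
    intro q
    by_cases hq : 0 ≤ (q:ℝ)
    · have h1 := mid_pos_part_ae hx hx₁ hx₂ hmid
        (hd x₁ hx₁ fun t => (hpos t).1) (hd x₂ hx₂ fun t => (hpos t).2) hq
      have h2 := mid_pos_part_ae hx.neg' hx₁.neg' hx₂.neg' hmidn
        (hdn x₁ hx₁ fun t => (hneg t).1) (hdn x₂ hx₂ fun t => (hneg t).2) hq
      filter_upwards [h1, h2] with ω hω1 hω2
      exact fun _ => ⟨hω1, hω2⟩
    · exact ae_of_all _ fun ω h => absurd h hq
  have hall : ∀ᵐ ω ∂ν, ∀ q : ℚ, 0 ≤ (q:ℝ) →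
      (max (x₁ ω - q) 0 + max (x₂ ω - q) 0 = 2 * max (x ω - q) 0 ∧
       max (-x₁ ω - q) 0 + max (-x₂ ω - q) 0 = 2 * max (-x ω - q) 0) :=
    (ae_all_iff).mpr hP
  have hfin : ∀ᵐ ω ∂ν, x₁ ω = x ω ∧ x₂ ω = x ω := by
    filter_upwards [hall, hmid] with ω hq hm
    set a := x₁ ω with ha
    set b := x₂ ω with hb
    set m := x ω with hmm
    have hsum : a + b = 2 * m := by rw [hm]; ring
    rcases le_or_gt 0 m with hm0 | hm0
    · -- use positive parts
      have key : ∀ y : ℝ, (∀ q : ℚ, 0 ≤ (q:ℝ) → max (y - q) 0 ≤ 2 * max (m - q) 0) →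
          y ≤ m := by
        intro y hy
        by_contra hc
        push_neg at hc
        obtain ⟨q, hq1, hq2⟩ := exists_rat_btwn hc
        have hq0 : 0 ≤ (q:ℝ) := le_trans hm0 hq1.le
        have h1 := hy q hq0
        have hrhs : max (m - (q:ℝ)) 0 = 0 := max_eq_right (by linarith)
        rw [hrhs] at h1
        have h2 : (0:ℝ) < max (y - q) 0 := lt_of_lt_of_le (by linarith) (le_max_left _ _)
        linarith
      have ha' : a ≤ m := by
        refine key a fun q hq0 => ?_
        have := (hq q hq0).1
        have := le_max_right (b - (q:ℝ)) 0
        linarith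
      have hb' : b ≤ m := by
        refine key b fun q hq0 => ?_
        have := (hq q hq0).1
        have := le_max_right (a - (q:ℝ)) 0
        linarith
      constructor <;> linarith
    · -- use negative parts
      have key : ∀ y : ℝ, (∀ q : ℚ, 0 ≤ (q:ℝ) → max (-y - q) 0 ≤ 2 * max (-m - q) 0) →
          m ≤ y := by
        intro y hy
        by_contra hc
        push_neg at hc
        have hc' : -m < -y := by linarith
        obtain ⟨q, hq1, hq2⟩ := exists_rat_btwn hc'
        have hq0 : 0 ≤ (q:ℝ) := by linarith
        have h1 := hy q hq0
        have hrhs : max (-m - (q:ℝ)) 0 = 0 := max_eq_right (by linarith)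
        rw [hrhs] at h1
        have h2 : (0:ℝ) < max (-y - q) 0 := lt_of_lt_of_le (by linarith) (le_max_left _ _)
        linarith
      have ha' : m ≤ a := by
        refine key a fun q hq0 => ?_
        have := (hq q hq0).2
        have := le_max_right (-b - (q:ℝ)) 0
        linarith
      have hb' : m ≤ b := by
        refine key b fun q hq0 => ?_
        have := (hq q hq0).2
        have := le_max_right (-a - (q:ℝ)) 0
        linarith
      constructor <;> linarith
  exact ⟨hfin.mono fun ω h => h.1, hfin.mono fun ω h => h.2⟩
end

section
/- Let w₁ < w₂ < w₃ < ... be strictly increasing positive weights and consider ℓ∞ with the weighted trace τ(a) = ∑ₙ aₙ wₙ. Define y = (0, 1/w₂, 1/(2w₃), ..., 1/(2^{n-2} wₙ), ...). Then there is no infinite matrix (a_{k,n}) with nonnegative entries satisfying ∑_k a_{k,n} w_k = wₙ for every n and ∑_n a_{k,n} ≤ 1 for every k, such that ∑_n a_{k,n} yₙ = x_k for all k, where x is defined by x₁ = 1/w₂ and x_k = ( (1/(2^{k-2} w_k))(w_k - w₁) + w₁/(2^{k-1} w_{k+1}) ) / w_k for k ≥ 2. -/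
noncomputable def yv (w : ℕ → ℝ) (n : ℕ) : ℝ :=
  if n = 0 then 0 else 1 / ((2:ℝ) ^ (n - 1) * w n)

noncomputable def xv (w : ℕ → ℝ) (k : ℕ) : ℝ :=
  if k = 0 then 1 / w 1
  else ((1 / ((2:ℝ) ^ (k - 1) * w k)) * (w k - w 0) + w 0 / ((2:ℝ) ^ k * w (k + 1))) / w k

lemma yv_zero (w : ℕ → ℝ) : yv w 0 = 0 := rfl

lemma yv_succ (w : ℕ → ℝ) (n : ℕ) : yv w (n+1) = 1 / ((2:ℝ) ^ n * w (n+1)) := by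
  simp [yv]

lemma yv_pos (w : ℕ → ℝ) (hpos : ∀ n, 0 < w n) (n : ℕ) : 0 < yv w (n+1) := by
  rw [yv_succ]
  have := hpos (n+1)
  positivity

lemma yv_lt (w : ℕ → ℝ) (hpos : ∀ n, 0 < w n) (hmono : StrictMono w) {m n : ℕ}
    (h : m < n) : yv w (n+1) < yv w (m+1) := by
  rw [yv_succ, yv_succ]
  apply one_div_lt_one_div_of_lt
  · have := hpos (m+1); positivity
  · exact mul_lt_mul' (pow_le_pow_right₀ one_le_two h.le) (hmono (by omega))
      (hpos _).le (by positivity)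

lemma yv_le (w : ℕ → ℝ) (hpos : ∀ n, 0 < w n) (hmono : StrictMono w) {m n : ℕ}
    (h : m ≤ n) : yv w (n+1) ≤ yv w (m+1) := by
  rcases h.lt_or_eq with h | h
  · exact (yv_lt w hpos hmono h).le
  · rw [h]

/-- Weighted `ℓ∞` version: with strictly increasing positive weights `w` (0-indexed;
`w 0 = w₁`, etc.), `y = (0, 1/w₂, 1/(2w₃), …)` and `x` as in the paper, there is no
nonnegative matrix `(a k n)` with weighted column sums `∑_k a k n · w k = w n`
(trace preservation) and row sums `≤ 1` mapping `y` to `x`. -/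
theorem stmt17 (w : ℕ → ℝ) (hpos : ∀ n, 0 < w n) (hmono : StrictMono w) :
    ¬ ∃ a : ℕ → ℕ → ℝ,
      (∀ k n, 0 ≤ a k n) ∧
      (∀ n, HasSum (fun k => a k n * w k) (w n)) ∧
      (∀ k, Summable (fun n => a k n)) ∧
      (∀ k, ∑' n, a k n ≤ 1) ∧
      (∀ k, HasSum
        (fun n => a k n * (if n = 0 then 0 else 1 / ((2:ℝ) ^ (n - 1) * w n)))
        (if k = 0 then 1 / w 1
         else ((1 / ((2:ℝ) ^ (k - 1) * w k)) * (w k - w 0) +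
            w 0 / ((2:ℝ) ^ k * w (k + 1))) / w k)) := by
  rintro ⟨a, ha, hcol, hsml, hrow, himg⟩
  have himg' : ∀ k, HasSum (fun n => a k n * yv w n) (xv w k) := himg
  have hw0 : 0 < w 0 := hpos 0
  have key : ∀ k, a k k * w k = w k - w 0 ∧ a k (k+1) * w k = w 0 ∧
      ∀ n, n ≠ k → n ≠ k + 1 → a k n = 0 := by
    intro k
    induction k using Nat.strong_induction_on with
    | _ k IH =>
    have hwk : 0 < w k := hpos k
    have hyk1 : 0 < yv w (k+1) := yv_pos w hpos k
    -- columns 1 ≤ n < k are exhausted by rows n-1 and n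
    have colzero : ∀ n, 0 < n → n < k → a k n = 0 := by
      intro n hn hnk
      obtain ⟨m, rfl⟩ : ∃ m, n = m + 1 := ⟨n - 1, by omega⟩
      have hc := hcol (m+1)
      have h1 : a m (m+1) * w m = w 0 := (IH m (by omega)).2.1
      have h2 : a (m+1) (m+1) * w (m+1) = w (m+1) - w 0 := (IH (m+1) hnk).1
      have hs : ∑ j ∈ ({m, m+1, k} : Finset ℕ), a j (m+1) * w j ≤ w (m+1) :=
        sum_le_hasSum _ (fun i _ => mul_nonneg (ha i _) (hpos i).le) hc
      rw [Finset.sum_insert (by simp only [Finset.mem_insert, Finset.mem_singleton]; omega),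
        Finset.sum_insert (by simp only [Finset.mem_singleton]; omega),
        Finset.sum_singleton] at hs
      have h4 : a k (m+1) * w k ≤ 0 := by linarith
      have h5 : 0 ≤ a k (m+1) * w k := mul_nonneg (ha _ _) hwk.le
      rcases mul_eq_zero.mp (le_antisymm h4 h5) with h | h
      · exact h
      · exact absurd h (ne_of_gt hwk)
    have hsa : Summable (a k) := hsml k
    have hF := himg' k
    have hsF : Summable (fun n => a k n * yv w n) := hF.summable
    have hgnn : ∀ n, 0 ≤ (if n = k then 0 else a k n) := by
      intro n; by_cases h : n = k
      · simp [h]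
      · simpa [h] using ha k n
    have hgle : ∀ n, (if n = k then 0 else a k n) ≤ a k n := by
      intro n; by_cases h : n = k
      · simp only [if_pos h]; exact ha k n
      · simp [h]
    have hsg : Summable (fun n => if n = k then 0 else a k n) :=
      Summable.of_nonneg_of_le hgnn hgle hsa
    have hGnn : ∀ n, 0 ≤ (if n = k then 0 else a k n * yv w n) := by
      intro n; by_cases h : n = k
      · simp [h]
      · simp only [if_neg h]
        cases n with
        | zero => rw [yv_zero, mul_zero]
        | succ m => exact mul_nonneg (ha _ _) (yv_pos w hpos m).le
    have hGle : ∀ n, (if n = k then 0 else a k n * yv w n)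
        ≤ (if n = k then 0 else a k n) * yv w (k+1) := by
      intro n
      by_cases h : n = k
      · simp [h]
      rw [if_neg h, if_neg h]
      cases n with
      | zero => rw [yv_zero, mul_zero]; exact mul_nonneg (ha _ _) hyk1.le
      | succ m =>
        rcases lt_or_ge (m+1) k with hlt | hge
        · rw [colzero (m+1) (by omega) hlt, zero_mul, zero_mul]
        · have hk : k ≤ m := by omega
          exact mul_le_mul_of_nonneg_left (yv_le w hpos hmono hk) (ha k (m+1))
    have hsG : Summable (fun n => if n = k then 0 else a k n * yv w n) :=
      Summable.of_nonneg_of_le hGnn hGle (hsg.mul_right _)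
    have split_a : ∑' n, a k n = a k k + ∑' n, (if n = k then 0 else a k n) :=
      Summable.tsum_eq_add_tsum_ite hsa k
    have split_F : ∑' n, a k n * yv w n
        = a k k * yv w k + ∑' n, (if n = k then 0 else a k n * yv w n) :=
      Summable.tsum_eq_add_tsum_ite hsF k
    have h2 : ∑' n, (if n = k then 0 else a k n * yv w n)
        ≤ (∑' n, (if n = k then 0 else a k n)) * yv w (k+1) := by
      rw [← tsum_mul_right]
      exact Summable.tsum_le_tsum hGle hsG (hsg.mul_right _)
    have h3 : a k k + ∑' n, (if n = k then 0 else a k n) ≤ 1 := by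
      rw [← split_a]; exact hrow k
    have hxeq : xv w k = a k k * yv w k + ∑' n, (if n = k then 0 else a k n * yv w n) := by
      rw [← split_F, hF.tsum_eq]
    have hxk : xv w k
        = (w k - w 0) / w k * yv w k + (1 - (w k - w 0) / w k) * yv w (k+1) := by
      cases k with
      | zero =>
        rw [yv_zero, yv_succ]
        simp only [xv, if_pos rfl]
        rw [sub_self, zero_div]
        norm_num
      | succ j =>
        rw [yv_succ, yv_succ]
        simp only [xv, Nat.succ_ne_zero, if_false, Nat.add_sub_cancel]
        have h1 : w (j+1) ≠ 0 := (hpos _).ne'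
        have h2 : w (j+2) ≠ 0 := (hpos _).ne'
        have h3 : (2:ℝ) ^ j ≠ 0 := by positivity
        have h4 : (2:ℝ) ^ (j+1) ≠ 0 := by positivity
        field_simp
        ring
    -- a k k is forced
    have htα : a k k = (w k - w 0) / w k := by
      rcases Nat.eq_zero_or_pos k with hk0 | hk1
      · subst hk0
        rw [sub_self, zero_div]
        rw [yv_zero, mul_zero, zero_add] at hxeq
        rw [yv_zero, sub_self, zero_div, mul_zero, zero_add, sub_zero, one_mul] at hxk
        have h4 : (∑' n, (if n = 0 then (0:ℝ) else a 0 n)) * yv w 1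
            ≤ (1 - a 0 0) * yv w 1 :=
          mul_le_mul_of_nonneg_right (by linarith) hyk1.le
        have h5 : 0 ≤ a 0 0 := ha 0 0
        nlinarith [hxeq, hxk, h2, h4, hyk1]
      · obtain ⟨j, rfl⟩ : ∃ j, k = j + 1 := ⟨k - 1, by omega⟩
        -- Step B: column k bound forces a k k ≤ (w k - w 0)/w k
        have hcB := hcol (j+1)
        have hw0' : a j (j+1) * w j = w 0 := (IH j (by omega)).2.1
        have hsB : ∑ i ∈ ({j, j+1} : Finset ℕ), a i (j+1) * w i ≤ w (j+1) :=
          sum_le_hasSum _ (fun i _ => mul_nonneg (ha i _) (hpos i).le) hcB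
        rw [Finset.sum_insert (by simp only [Finset.mem_singleton]; omega),
          Finset.sum_singleton] at hsB
        have tle : a (j+1) (j+1) ≤ (w (j+1) - w 0) / w (j+1) := by
          rw [le_div_iff₀ hwk]; linarith
        have hyk : yv w (j+1+1) < yv w (j+1) := by
          have : yv w (j+1) = yv w (j+0+1) := by norm_num
          rw [this]
          exact yv_lt w hpos hmono (by omega)
        have h4 : (∑' n, (if n = j+1 then (0:ℝ) else a (j+1) n)) * yv w (j+1+1)
            ≤ (1 - a (j+1) (j+1)) * yv w (j+1+1) :=
          mul_le_mul_of_nonneg_right (by linarith) hyk1.le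
        have h5 : (w (j+1) - w 0) / w (j+1) * yv w (j+1)
              + (1 - (w (j+1) - w 0) / w (j+1)) * yv w (j+1+1)
            ≤ a (j+1) (j+1) * yv w (j+1) + (1 - a (j+1) (j+1)) * yv w (j+1+1) := by
          rw [← hxk]
          rw [hxeq]
          linarith [h2, h4]
        have hge : (w (j+1) - w 0) / w (j+1) ≤ a (j+1) (j+1) := by
          by_contra hcon
          push_neg at hcon
          nlinarith [mul_pos (sub_pos.2 hcon) (sub_pos.2 hyk)]
        exact le_antisymm tle hge
    -- tsum of the remaining terms
    have hGsum : ∑' n, (if n = k then 0 else a k n * yv w n) = (1 - (w k - w 0) / w k) * yv w (k+1) := by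
      rw [htα] at hxeq
      rw [hxk] at hxeq
      linarith
    have hgsum : ∑' n, (if n = k then 0 else a k n) = 1 - (w k - w 0) / w k := by
      rw [htα] at h3
      have hle2 : (1 - (w k - w 0) / w k) * yv w (k+1)
          ≤ (∑' n, (if n = k then 0 else a k n)) * yv w (k+1) := by
        rw [← hGsum]; exact h2
      have h6 : 1 - (w k - w 0) / w k ≤ ∑' n, (if n = k then 0 else a k n) :=
        le_of_mul_le_mul_right hle2 hyk1
      linarith
    -- termwise equality
    have hterm : ∀ n, (if n = k then 0 else a k n * yv w n)
        = (if n = k then 0 else a k n) * yv w (k+1) := by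
      have hs1 : Summable (fun n => (if n = k then 0 else a k n) * yv w (k+1)
          - (if n = k then 0 else a k n * yv w n)) := (hsg.mul_right _).sub hsG
      have hts : ∑' n, ((if n = k then 0 else a k n) * yv w (k+1)
          - (if n = k then 0 else a k n * yv w n)) = 0 := by
        rw [Summable.tsum_sub (hsg.mul_right _) hsG, tsum_mul_right, hgsum, hGsum]
        ring
      intro n
      have hle := Summable.le_tsum hs1 n (fun m _ => sub_nonneg.2 (hGle m))
      rw [hts] at hle
      have := hGle n
      linarith
    -- the off-diagonal entries vanish
    have hC3 : ∀ n, n ≠ k → n ≠ k + 1 → a k n = 0 := by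
      intro n hnk hnk1
      cases n with
      | zero =>
        have h := hterm 0
        rw [if_neg hnk, if_neg hnk, yv_zero, mul_zero] at h
        rcases mul_eq_zero.mp h.symm with h' | h'
        · exact h'
        · exact absurd h' (ne_of_gt hyk1)
      | succ m =>
        rcases lt_trichotomy (m+1) k with hlt | heq | hgt
        · exact colzero (m+1) (by omega) hlt
        · exact absurd heq hnk
        · have hkm : k < m := by omega
          have h := hterm (m+1)
          rw [if_neg hnk, if_neg hnk] at h
          have hlt := yv_lt w hpos hmono hkm
          by_contra hne
          have hpos' : 0 < a k (m+1) := (ha k (m+1)).lt_of_ne (Ne.symm hne)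
          nlinarith
    -- a k (k+1) is forced
    have hsingle : ∑' n, (if n = k then (0:ℝ) else a k n)
        = (if k+1 = k then (0:ℝ) else a k (k+1)) := by
      apply tsum_eq_single
      intro m hm
      by_cases h : m = k
      · rw [if_pos h]
      · rw [if_neg h]
        exact hC3 m h hm
    rw [if_neg (by omega)] at hsingle
    have hk1 : a k (k+1) = 1 - (w k - w 0) / w k := by rw [← hsingle, hgsum]
    refine ⟨?_, ?_, hC3⟩
    · rw [htα, div_mul_cancel₀ _ hwk.ne']
    · rw [hk1]
      field_simp
      ring
  -- the zeroth column is identically zero, contradicting its weighted sum w 0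
  have h0 := hcol 0
  have hz : ∀ j, a j 0 * w j = 0 := by
    intro j
    cases j with
    | zero =>
      have h := (key 0).1
      rw [h, sub_self]
    | succ j =>
      rw [(key (j+1)).2.2 0 (by omega) (by omega), zero_mul]
  rw [show (fun j => a j 0 * w j) = (fun _ : ℕ => (0:ℝ)) from funext hz] at h0
  have : w 0 = 0 := h0.unique hasSum_zero
  linarith
end

section
/- Let y ∈ L¹(0,∞) and x ∈ Ω(y) = {z ∈ L¹(0,∞) : z ≺ y}. Suppose for some 0 < s₁ < s₂ < s₃ < s₄ < ∞ we have 0 ≤ μ(s_{i+1}; x₊) < μ(s_i; x₊) for i = 1,2,3, and ∫₀^{s₁} μ(t;x₊) dt + μ(s₁;x₊)(s - s₁) ≤ ∫₀^{s} μ(t;y₊) dt for all s ∈ [s₁, s₄]. Then x is not an extreme point of Ω(y). -/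
open MeasureTheory Set

open scoped ENNReal

namespace Stmt18Aux

noncomputable section

def Dd (h : ℝ → ℝ) (u : ℝ) : ℝ≥0∞ := (volume.restrict (Set.Ioi (0:ℝ))) {x | u < |h x|}

lemma rearr_eq_sInf (f : ℝ → ℝ) (t : ℝ) :
    rearr f t = sInf {s : ℝ | 0 ≤ s ∧ Dd f s ≤ ENNReal.ofReal t} := rfl

lemma Dd_antitone (h : ℝ → ℝ) : Antitone (Dd h) := fun _ _ hab =>
  measure_mono (fun _ ht => lt_of_le_of_lt hab ht)

lemma Dd_measurable (h : ℝ → ℝ) : Measurable (Dd h) := (Dd_antitone h).measurable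

lemma Dd_congr {h h' : ℝ → ℝ} (hae : h =ᵐ[volume.restrict (Set.Ioi (0:ℝ))] h') :
    Dd h = Dd h' := by
  funext u
  refine measure_congr ?_
  filter_upwards [hae] with t ht
  show (u < |h t|) = (u < |h' t|)
  rw [ht]

lemma rearr_congr {h h' : ℝ → ℝ} (hae : h =ᵐ[volume.restrict (Set.Ioi (0:ℝ))] h') :
    rearr h = rearr h' := by
  funext t; rw [rearr_eq_sInf, rearr_eq_sInf, Dd_congr hae]

lemma rearr_nonneg (h : ℝ → ℝ) (t : ℝ) : 0 ≤ rearr h t :=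
  Real.sInf_nonneg (fun _ hx => hx.1)

lemma bddBelow_Sset (h : ℝ → ℝ) (s : ℝ) :
    BddBelow {v : ℝ | 0 ≤ v ∧ Dd h v ≤ ENNReal.ofReal s} := ⟨0, fun _ hx => hx.1⟩

/-- If the function has finite `L¹` norm, the defining set is non-empty for `s > 0`. -/
lemma exists_mem_Sset (h : ℝ → ℝ) (hm : Measurable h)
    (hfin : ∫⁻ t, ENNReal.ofReal |h t| ∂(volume.restrict (Set.Ioi (0:ℝ))) ≠ ∞)
    {s : ℝ} (hs : 0 < s) :
    ∃ v : ℝ, 0 ≤ v ∧ Dd h v ≤ ENNReal.ofReal s := by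
  set I := ∫⁻ t, ENNReal.ofReal |h t| ∂(volume.restrict (Set.Ioi (0:ℝ))) with hI
  refine ⟨I.toReal / s + 1, by positivity, ?_⟩
  have hv : 0 < I.toReal / s + 1 := by positivity
  have h1 : Dd h (I.toReal / s + 1)
      ≤ (volume.restrict (Set.Ioi (0:ℝ)))
        {t | ENNReal.ofReal (I.toReal / s + 1) ≤ ENNReal.ofReal |h t|} :=
    measure_mono fun t ht => ENNReal.ofReal_le_ofReal (le_of_lt ht)
  have h2 := meas_ge_le_lintegral_div (μ := volume.restrict (Set.Ioi (0:ℝ)))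
      (hm.abs.ennreal_ofReal).aemeasurable (ε := ENNReal.ofReal (I.toReal / s + 1))
      (by simp [ENNReal.ofReal_eq_zero, not_le, hv]) (by simp)
  refine le_trans (le_trans h1 h2) (ENNReal.div_le_of_le_mul ?_)
  rw [← ENNReal.ofReal_mul hs.le]
  calc I = ENNReal.ofReal I.toReal := (ENNReal.ofReal_toReal hfin).symm
    _ ≤ ENNReal.ofReal (s * (I.toReal / s + 1)) := by
        apply ENNReal.ofReal_le_ofReal
        rw [mul_add, mul_div_cancel₀ _ (ne_of_gt hs)]
        nlinarith
section KeyFacts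

variable {h : ℝ → ℝ}

lemma Dd_le_of_rearr_lt {s u : ℝ}
    (hS : ∃ v, 0 ≤ v ∧ Dd h v ≤ ENNReal.ofReal s)
    (hu : rearr h s < u) : Dd h u ≤ ENNReal.ofReal s := by
  rw [rearr_eq_sInf] at hu
  obtain ⟨w, hw, hwu⟩ := exists_lt_of_csInf_lt hS hu
  exact le_trans (Dd_antitone h hwu.le) hw.2

lemma Dd_rearr_le (hm : Measurable h)
    (hfin : ∫⁻ t, ENNReal.ofReal |h t| ∂(volume.restrict (Set.Ioi (0:ℝ))) ≠ ∞)
    {s : ℝ} (hs : 0 < s) : Dd h (rearr h s) ≤ ENNReal.ofReal s := by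
  set r := rearr h s with hr
  have key : {t | r < |h t|} = ⋃ n : ℕ, {t | r + 1/(n+1) < |h t|} := by
    ext t
    simp only [mem_setOf_eq, mem_iUnion]
    constructor
    · intro ht
      obtain ⟨n, hn⟩ := exists_nat_one_div_lt (sub_pos.2 ht)
      exact ⟨n, by linarith⟩
    · rintro ⟨n, hn⟩
      have : 0 < 1/((n:ℝ)+1) := by positivity
      linarith
  have mono : Monotone (fun n : ℕ => {t | r + 1/((n:ℝ)+1) < |h t|}) := by
    intro m n hmn t ht
    have h1 : ((m:ℝ)+1) ≤ ((n:ℝ)+1) := by exact_mod_cast by omega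
    have h2 : 1/((n:ℝ)+1) ≤ 1/((m:ℝ)+1) := by
      apply one_div_le_one_div_of_le (by positivity) h1
    simp only [mem_setOf_eq] at ht ⊢
    linarith
  show (volume.restrict (Set.Ioi (0:ℝ))) {t | r < |h t|} ≤ _
  rw [key, (mono.directed_le).measure_iUnion]
  apply iSup_le
  intro n
  have hpos : (0:ℝ) < 1/((n:ℝ)+1) := by positivity
  exact Dd_le_of_rearr_lt (exists_mem_Sset h hm hfin hs) (by linarith [lt_add_of_pos_right r hpos])

lemma lt_rearr_iff (hm : Measurable h)
    (hfin : ∫⁻ t, ENNReal.ofReal |h t| ∂(volume.restrict (Set.Ioi (0:ℝ))) ≠ ∞)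
    {s u : ℝ} (hs : 0 < s) (hu : 0 ≤ u) :
    u < rearr h s ↔ ENNReal.ofReal s < Dd h u := by
  constructor
  · intro hlt
    by_contra hc
    push_neg at hc
    have : rearr h s ≤ u := by
      rw [rearr_eq_sInf]
      exact csInf_le (bddBelow_Sset h s) ⟨hu, hc⟩
    linarith
  · intro hlt
    by_contra hc
    push_neg at hc
    exact absurd hlt (not_lt.2 (le_trans (Dd_antitone h hc) (Dd_rearr_le hm hfin hs)))

lemma rearr_lt_iff (hm : Measurable h)
    (hfin : ∫⁻ t, ENNReal.ofReal |h t| ∂(volume.restrict (Set.Ioi (0:ℝ))) ≠ ∞)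
    {s u : ℝ} (hs : 0 < s) (hu : 0 ≤ u) :
    rearr h s ≤ u ↔ Dd h u ≤ ENNReal.ofReal s := by
  constructor
  · intro h1
    by_contra hc
    push_neg at hc
    exact absurd ((lt_rearr_iff hm hfin hs hu).2 hc) (not_lt.2 h1)
  · intro h1
    by_contra hc
    push_neg at hc
    exact absurd h1 (not_le.2 ((lt_rearr_iff hm hfin hs hu).1 hc))

lemma rearr_antitoneOn (hm : Measurable h)
    (hfin : ∫⁻ t, ENNReal.ofReal |h t| ∂(volume.restrict (Set.Ioi (0:ℝ))) ≠ ∞) :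
    AntitoneOn (rearr h) (Ioi (0:ℝ)) := by
  intro s hs s' _ hss
  rw [rearr_eq_sInf, rearr_eq_sInf]
  refine csInf_le_csInf (bddBelow_Sset h s') (exists_mem_Sset h hm hfin hs) ?_
  intro v hv
  exact ⟨hv.1, le_trans hv.2 (ENNReal.ofReal_le_ofReal hss)⟩

end KeyFacts

section Phi

def Phi (h : ℝ → ℝ) (T : ℝ≥0∞) : ℝ≥0∞ := ∫⁻ u in Ioi (0:ℝ), min (Dd h u) T

lemma Phi_mono (h : ℝ → ℝ) {T T' : ℝ≥0∞} (hT : T ≤ T') : Phi h T ≤ Phi h T' :=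
  lintegral_mono fun _ => min_le_min le_rfl hT

variable {h : ℝ → ℝ}

lemma lintegral_rearr (hm : Measurable h)
    (hfin : ∫⁻ t, ENNReal.ofReal |h t| ∂(volume.restrict (Set.Ioi (0:ℝ))) ≠ ∞)
    {t : ℝ} (ht : 0 < t) :
    ∫⁻ s in Ioc (0:ℝ) t, ENNReal.ofReal (rearr h s) = Phi h (ENNReal.ofReal t) := by
  have hDm := Dd_measurable h
  set F : ℝ → ℝ → ℝ≥0∞ := fun s u => if ENNReal.ofReal s < Dd h u then 1 else 0 with hF
  have hmF : Measurable (Function.uncurry F) := by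
    have hset : MeasurableSet {p : ℝ × ℝ | ENNReal.ofReal p.1 < Dd h p.2} :=
      measurableSet_lt (ENNReal.measurable_ofReal.comp measurable_fst) (hDm.comp measurable_snd)
    exact Measurable.ite hset measurable_const measurable_const
  have step1 : ∀ s ∈ Ioc (0:ℝ) t,
      ENNReal.ofReal (rearr h s) = ∫⁻ u in Ioi (0:ℝ), F s u := by
    intro s hs
    have hset : MeasurableSet {u : ℝ | ENNReal.ofReal s < Dd h u} :=
      measurableSet_lt measurable_const hDm
    have hfun : (fun u => F s u)
        = {u : ℝ | ENNReal.ofReal s < Dd h u}.indicator (fun _ => (1:ℝ≥0∞)) := by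
      funext u; simp [hF, Set.indicator_apply, mem_setOf_eq]
    rw [hfun, lintegral_indicator hset, setLIntegral_one, Measure.restrict_apply hset]
    have hseteq : {u : ℝ | ENNReal.ofReal s < Dd h u} ∩ Ioi (0:ℝ) = Ioo 0 (rearr h s) := by
      ext u
      simp only [mem_inter_iff, mem_setOf_eq, mem_Ioi, mem_Ioo]
      constructor
      · rintro ⟨h1, h2⟩
        exact ⟨h2, (lt_rearr_iff hm hfin hs.1 h2.le).2 h1⟩
      · rintro ⟨h1, h2⟩
        exact ⟨(lt_rearr_iff hm hfin hs.1 h1.le).1 h2, h1⟩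
    rw [hseteq, Real.volume_Ioo, sub_zero]
  calc ∫⁻ s in Ioc (0:ℝ) t, ENNReal.ofReal (rearr h s)
      = ∫⁻ s in Ioc (0:ℝ) t, ∫⁻ u in Ioi (0:ℝ), F s u :=
        setLIntegral_congr_fun measurableSet_Ioc step1
    _ = ∫⁻ u in Ioi (0:ℝ), ∫⁻ s in Ioc (0:ℝ) t, F s u :=
        lintegral_lintegral_swap hmF.aemeasurable
    _ = Phi h (ENNReal.ofReal t) := by
        refine setLIntegral_congr_fun measurableSet_Ioi ?_
        intro u _
        beta_reduce
        have hsetS : MeasurableSet {s : ℝ | ENNReal.ofReal s < Dd h u} :=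
          measurableSet_lt ENNReal.measurable_ofReal measurable_const
        have hfun : (fun s => F s u)
            = {s : ℝ | ENNReal.ofReal s < Dd h u}.indicator (fun _ => (1:ℝ≥0∞)) := by
          funext s; simp [hF, Set.indicator_apply, mem_setOf_eq]
        rw [hfun, lintegral_indicator hsetS, setLIntegral_one, Measure.restrict_apply hsetS]
        by_cases hD : Dd h u = ∞
        · have huniv : {s : ℝ | ENNReal.ofReal s < Dd h u} = univ := by
            ext s; simp [hD, ENNReal.ofReal_lt_top]
          rw [huniv, univ_inter, Real.volume_Ioc, sub_zero, hD]
          simp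
        · set c := (Dd h u).toReal with hc
          by_cases hct : c ≤ t
          · have hseteq : {s : ℝ | ENNReal.ofReal s < Dd h u} ∩ Ioc (0:ℝ) t = Ioo 0 c := by
              ext s
              simp only [mem_inter_iff, mem_setOf_eq, mem_Ioc, mem_Ioo]
              constructor
              · rintro ⟨h1, h2, _⟩
                exact ⟨h2, (ENNReal.ofReal_lt_iff_lt_toReal h2.le hD).1 h1⟩
              · rintro ⟨h1, h2⟩
                exact ⟨(ENNReal.ofReal_lt_iff_lt_toReal h1.le hD).2 h2, h1, le_trans h2.le hct⟩
            rw [hseteq, Real.volume_Ioo, sub_zero]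
            rw [min_eq_left]
            · exact ENNReal.ofReal_toReal hD
            · rw [← ENNReal.ofReal_toReal hD]
              exact ENNReal.ofReal_le_ofReal hct
          · push_neg at hct
            have hseteq : {s : ℝ | ENNReal.ofReal s < Dd h u} ∩ Ioc (0:ℝ) t = Ioc 0 t := by
              ext s
              simp only [mem_inter_iff, mem_setOf_eq, mem_Ioc]
              constructor
              · rintro ⟨_, h2⟩; exact h2
              · rintro ⟨h1, h2⟩
                refine ⟨(ENNReal.ofReal_lt_iff_lt_toReal h1.le hD).2 (by linarith), h1, h2⟩
            rw [hseteq, Real.volume_Ioc, sub_zero]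
            rw [min_eq_right]
            rw [← ENNReal.ofReal_toReal hD]
            exact ENNReal.ofReal_le_ofReal hct.le

lemma integral_rearr_eq (hm : Measurable h)
    (hfin : ∫⁻ t, ENNReal.ofReal |h t| ∂(volume.restrict (Set.Ioi (0:ℝ))) ≠ ∞)
    {t : ℝ} (ht : 0 < t) :
    ∫ s in Ioc (0:ℝ) t, rearr h s = (Phi h (ENNReal.ofReal t)).toReal := by
  rw [integral_eq_lintegral_of_nonneg_ae (ae_of_all _ fun s => rearr_nonneg h s)
      ((aemeasurable_restrict_of_antitoneOn measurableSet_Ioc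
        ((rearr_antitoneOn hm hfin).mono Ioc_subset_Ioi_self)).aestronglyMeasurable),
    lintegral_rearr hm hfin ht]

end Phi

section Tools

lemma min_le_min_add {a T T' : ℝ≥0∞} (hT : T' ≤ T) : min a T ≤ min a T' + (T - T') := by
  rcases le_total a T' with hc | hc
  · rw [min_eq_left hc, min_eq_left (le_trans hc hT)]
    exact le_self_add
  · rw [min_eq_right hc]
    calc min a T ≤ T := min_le_right _ _
      _ = T' + (T - T') := (add_tsub_cancel_of_le hT).symm

/-- Clamp estimate. -/
lemma clamp_est (D' : ℝ → ℝ≥0∞) (hD' : Measurable D') {c t t' : ℝ} (hc : 0 ≤ c)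
    (ht' : 0 ≤ t') (htt' : t' ≤ t)
    (hbound : ∀ u, c ≤ u → D' u ≤ ENNReal.ofReal t') :
    ∫⁻ u in Ioi (0:ℝ), min (D' u) (ENNReal.ofReal t)
      ≤ (∫⁻ u in Ioi (0:ℝ), min (D' u) (ENNReal.ofReal t'))
        + ENNReal.ofReal (t - t') * ENNReal.ofReal c := by
  have hpt : ∀ u ∈ Ioi (0:ℝ), min (D' u) (ENNReal.ofReal t)
      ≤ min (D' u) (ENNReal.ofReal t')
        + (Ioo (0:ℝ) c).indicator (fun _ => ENNReal.ofReal (t - t')) u := by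
    intro u hu
    by_cases hcu : c ≤ u
    · have h1 : D' u ≤ ENNReal.ofReal t' := hbound u hcu
      have h0 : (Ioo (0:ℝ) c).indicator (fun _ => ENNReal.ofReal (t-t')) u = 0 := by
        apply indicator_of_notMem
        intro hmem
        exact absurd hcu (not_le.2 hmem.2)
      rw [h0, add_zero, min_eq_left h1,
        min_eq_left (le_trans h1 (ENNReal.ofReal_le_ofReal htt'))]
    · push_neg at hcu
      have hmem : u ∈ Ioo (0:ℝ) c := ⟨hu, hcu⟩
      rw [Set.indicator_of_mem hmem]
      calc min (D' u) (ENNReal.ofReal t)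
          ≤ min (D' u) (ENNReal.ofReal t') + (ENNReal.ofReal t - ENNReal.ofReal t') :=
            min_le_min_add (ENNReal.ofReal_le_ofReal htt')
        _ = min (D' u) (ENNReal.ofReal t') + ENNReal.ofReal (t - t') := by
            rw [ENNReal.ofReal_sub _ ht']
  calc ∫⁻ u in Ioi (0:ℝ), min (D' u) (ENNReal.ofReal t)
      ≤ ∫⁻ u in Ioi (0:ℝ), (min (D' u) (ENNReal.ofReal t')
          + (Ioo (0:ℝ) c).indicator (fun _ => ENNReal.ofReal (t - t')) u) := by
        refine setLIntegral_mono ((hD'.min measurable_const).add (measurable_const.indicator measurableSet_Ioo)) hpt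
    _ = (∫⁻ u in Ioi (0:ℝ), min (D' u) (ENNReal.ofReal t'))
          + ∫⁻ u in Ioi (0:ℝ), (Ioo (0:ℝ) c).indicator (fun _ => ENNReal.ofReal (t - t')) u := by
        rw [lintegral_add_left (hD'.min measurable_const)]
    _ ≤ _ := by
        gcongr
        rw [lintegral_indicator measurableSet_Ioo, setLIntegral_const,
          Measure.restrict_apply measurableSet_Ioo]
        rw [inter_eq_left.2 (fun z hz => hz.1), Real.volume_Ioo, sub_zero, mul_comm]

/-- Layer-cake for the tail. -/
lemma tail_eq (h : ℝ → ℝ) (hm : Measurable h) (hpos : ∀ t, 0 ≤ h t) {θ : ℝ} (hθ : 0 ≤ θ) :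
    ∫⁻ u in Ioi θ, Dd h u
      = ∫⁻ t in Ioi (0:ℝ), (ENNReal.ofReal (h t) - ENNReal.ofReal θ) := by
  have habs : ∀ u x, (u < |h x|) = (u < h x) := by
    intro u x; rw [abs_of_nonneg (hpos x)]
  set F : ℝ → ℝ → ℝ≥0∞ := fun u x => if u < h x then 1 else 0 with hF
  have hmF : Measurable (Function.uncurry F) := by
    have hset : MeasurableSet {p : ℝ × ℝ | p.1 < h p.2} :=
      measurableSet_lt measurable_fst (hm.comp measurable_snd)
    exact Measurable.ite hset measurable_const measurable_const
  have step1 : ∀ u ∈ Ioi θ, Dd h u = ∫⁻ x in Ioi (0:ℝ), F u x := by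
    intro u _
    have hset : MeasurableSet {x : ℝ | u < h x} := measurableSet_lt measurable_const hm
    have hfun : (fun x => F u x) = {x : ℝ | u < h x}.indicator (fun _ => (1:ℝ≥0∞)) := by
      funext x; simp [hF, Set.indicator_apply, mem_setOf_eq]
    rw [hfun, lintegral_indicator hset, setLIntegral_one]
    show (volume.restrict (Set.Ioi (0:ℝ))) {x | u < |h x|} = _
    simp only [habs]
  calc ∫⁻ u in Ioi θ, Dd h u
      = ∫⁻ u in Ioi θ, ∫⁻ x in Ioi (0:ℝ), F u x :=
        setLIntegral_congr_fun measurableSet_Ioi step1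
    _ = ∫⁻ x in Ioi (0:ℝ), ∫⁻ u in Ioi θ, F u x :=
        lintegral_lintegral_swap hmF.aemeasurable
    _ = _ := by
        refine setLIntegral_congr_fun measurableSet_Ioi ?_
        intro x _
        beta_reduce
        have hsetS : MeasurableSet {u : ℝ | u < h x} := measurableSet_lt measurable_id measurable_const
        have hfun : (fun u => F u x) = {u : ℝ | u < h x}.indicator (fun _ => (1:ℝ≥0∞)) := by
          funext u; simp [hF, Set.indicator_apply, mem_setOf_eq]
        rw [hfun, lintegral_indicator hsetS, setLIntegral_one, Measure.restrict_apply hsetS]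
        have : {u : ℝ | u < h x} ∩ Ioi θ = Ioo θ (h x) := by
          ext u
          simp only [mem_inter_iff, mem_setOf_eq, mem_Ioi, mem_Ioo]
          tauto
        rw [this, Real.volume_Ioo, ENNReal.ofReal_sub _ hθ]

/-- Shift comparison. -/
lemma Phi_shift_le (h q : ℝ → ℝ) {c : ℝ} (hc : 0 ≤ c)
    (hcomp : ∀ u, 0 < u → Dd h (u + c) ≤ Dd q u) (T : ℝ≥0∞) :
    Phi h T ≤ ENNReal.ofReal c * T + Phi q T := by
  have hsplit : Ioi (0:ℝ) = Ioc 0 c ∪ Ioi c := (Ioc_union_Ioi_eq_Ioi hc).symm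
  have hdisj : Disjoint (Ioc (0:ℝ) c) (Ioi c) := by
    apply Set.disjoint_left.2
    intro u hu1 hu2
    exact absurd hu1.2 (not_le.2 hu2)
  calc Phi h T = (∫⁻ u in Ioc (0:ℝ) c, min (Dd h u) T) + ∫⁻ u in Ioi c, min (Dd h u) T := by
        rw [Phi, hsplit, lintegral_union measurableSet_Ioi hdisj]
    _ ≤ ENNReal.ofReal c * T + Phi q T := by
        gcongr
        · calc ∫⁻ u in Ioc (0:ℝ) c, min (Dd h u) T ≤ ∫⁻ _ in Ioc (0:ℝ) c, T :=
              lintegral_mono fun _ => min_le_right _ _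
            _ = ENNReal.ofReal c * T := by
              rw [setLIntegral_const, Real.volume_Ioc, sub_zero, mul_comm]
        · have htrans : ∫⁻ u in Ioi c, min (Dd h u) T
              = ∫⁻ u in Ioi (0:ℝ), min (Dd h (u + c)) T := by
            have := (measurePreserving_add_right volume c).setLIntegral_comp_preimage_emb
              (MeasurableEquiv.addRight c).measurableEmbedding
              (fun u => min (Dd h u) T) (Ioi c)
            rw [← this]
            congr 1
            ext u
            simp [mem_preimage, mem_Ioi]
          rw [htrans]
          refine setLIntegral_mono ((Dd_measurable q).min measurable_const) ?_
          intro u hu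
          exact min_le_min (hcomp u hu) le_rfl

end Tools

lemma fin_of_integrable {h : ℝ → ℝ}
    (hi : Integrable h (volume.restrict (Set.Ioi (0:ℝ)))) :
    ∫⁻ t, ENNReal.ofReal |h t| ∂(volume.restrict (Set.Ioi (0:ℝ))) ≠ ∞ := by
  have h2 := hi.2
  rw [hasFiniteIntegral_iff_norm] at h2
  simpa [Real.norm_eq_abs] using h2.ne

end

end Stmt18Aux

open Stmt18Aux ENNReal

set_option maxHeartbeats 2000000

/-- Perturbation lemma: under the stated spacing and slack conditions on the
rearrangement of `x₊`, `x` is not an extreme point of `Ω(y)`. -/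
theorem stmt18 (y x : ℝ → ℝ) (hy : IntegrableOn y (Set.Ioi 0))
    (hx : IntegrableOn x (Set.Ioi 0)) (hmaj : Maj x y)
    (s₁ s₂ s₃ s₄ : ℝ) (h0 : 0 < s₁) (h12 : s₁ < s₂) (h23 : s₂ < s₃) (h34 : s₃ < s₄)
    (hdec₁ : rearr (posPart' x) s₂ < rearr (posPart' x) s₁)
    (hdec₂ : rearr (posPart' x) s₃ < rearr (posPart' x) s₂)
    (hdec₃ : rearr (posPart' x) s₄ < rearr (posPart' x) s₃)
    (hslack : ∀ s ∈ Set.Icc s₁ s₄,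
      (∫ t in Set.Ioc (0:ℝ) s₁, rearr (posPart' x) t) +
          rearr (posPart' x) s₁ * (s - s₁) ≤
        ∫ t in Set.Ioc (0:ℝ) s, rearr (posPart' y) t) :
    ∃ x₁ x₂ : ℝ → ℝ,
      (IntegrableOn x₁ (Set.Ioi 0) ∧ Maj x₁ y) ∧
      (IntegrableOn x₂ (Set.Ioi 0) ∧ Maj x₂ y) ∧
      (∀ t, x t = (x₁ t + x₂ t) / 2) ∧
      ¬ x₁ =ᵐ[volume.restrict (Set.Ioi (0:ℝ))] x₂ := by
  classical
  -- measurable representatives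
  obtain ⟨G, hGm, hxG⟩ : ∃ G : ℝ → ℝ, Measurable G ∧ x =ᵐ[volume.restrict (Set.Ioi (0:ℝ))] G :=
    ⟨(hx.aemeasurable).mk x, (hx.aemeasurable).measurable_mk, (hx.aemeasurable).ae_eq_mk⟩
  obtain ⟨Y, hYm, hyY⟩ : ∃ Y : ℝ → ℝ, Measurable Y ∧ y =ᵐ[volume.restrict (Set.Ioi (0:ℝ))] Y :=
    ⟨(hy.aemeasurable).mk y, (hy.aemeasurable).measurable_mk, (hy.aemeasurable).ae_eq_mk⟩
  set p : ℝ → ℝ := fun t => max (G t) 0 with hp_def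
  set py : ℝ → ℝ := fun t => max (Y t) 0 with hpy_def
  have hpm : Measurable p := hGm.max measurable_const
  have hpym : Measurable py := hYm.max measurable_const
  have hppos : ∀ t, 0 ≤ p t := fun t => le_max_right _ _
  have hpypos : ∀ t, 0 ≤ py t := fun t => le_max_right _ _
  have hpae : posPart' x =ᵐ[volume.restrict (Set.Ioi (0:ℝ))] p := by
    filter_upwards [hxG] with t ht
    simp only [posPart', hp_def, ht]
  have hpyae : posPart' y =ᵐ[volume.restrict (Set.Ioi (0:ℝ))] py := by
    filter_upwards [hyY] with t ht
    simp only [posPart', hpy_def, ht]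
  have hp_int : Integrable p (volume.restrict (Set.Ioi (0:ℝ))) :=
    (hx.pos_part).congr hpae
  have hpy_int : Integrable py (volume.restrict (Set.Ioi (0:ℝ))) :=
    (hy.pos_part).congr hpyae
  have hfinp := fin_of_integrable hp_int
  have hfinpy := fin_of_integrable hpy_int
  -- rearrangement values
  have hrx : rearr (posPart' x) = rearr p := rearr_congr hpae
  have hry : rearr (posPart' y) = rearr py := rearr_congr hpyae
  set α := rearr p s₁ with hα_def
  set β := rearr p s₂ with hβ_def
  set γ := rearr p s₃ with hγ_def
  set ρ := rearr p s₄ with hρ_def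
  rw [hrx] at hdec₁ hdec₂ hdec₃
  have hρ0 : 0 ≤ ρ := rearr_nonneg p s₄
  have hγ0 : 0 < γ := lt_of_le_of_lt hρ0 hdec₃
  have hβγ : γ < β := hdec₂
  have hαβ : β < α := hdec₁
  -- the levels
  set a₁ := (γ + β)/2 with ha₁_def
  set a₂ := (β + α)/2 with ha₂_def
  set b₁ := (ρ + γ)/2 with hb₁_def
  set b₂ := (3*γ + β)/4 with hb₂_def
  have hb₁0 : 0 < b₁ := by simp only [hb₁_def]; linarith
  have hρb₁ : ρ < b₁ := by simp only [hb₁_def]; linarith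
  have hb₁γ : b₁ < γ := by simp only [hb₁_def]; linarith
  have hγb₂ : γ < b₂ := by simp only [hb₂_def]; linarith
  have hb₂a₁ : b₂ < a₁ := by simp only [hb₂_def, ha₁_def]; linarith
  have ha₁β : a₁ < β := by simp only [ha₁_def]; linarith
  have hβa₂ : β < a₂ := by simp only [ha₂_def]; linarith
  have ha₂α : a₂ < α := by simp only [ha₂_def]; linarith
  have hγa₁ : γ < a₁ := by simp only [ha₁_def]; linarith
  -- distribution values
  have hDa₁ : ENNReal.ofReal s₂ < Dd p a₁ :=
    (lt_rearr_iff hpm hfinp (by linarith) (by linarith)).1 ha₁β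
  have hDa₂ : Dd p a₂ ≤ ENNReal.ofReal s₂ :=
    (rearr_lt_iff hpm hfinp (by linarith) (by linarith)).1 hβa₂.le
  have hDb₁ : ENNReal.ofReal s₃ < Dd p b₁ :=
    (lt_rearr_iff hpm hfinp (by linarith) hb₁0.le).1 hb₁γ
  have hDb₂ : Dd p b₂ ≤ ENNReal.ofReal s₃ :=
    (rearr_lt_iff hpm hfinp (by linarith) (by linarith)).1 hγb₂.le
  have hDb₁s₄ : Dd p b₁ ≤ ENNReal.ofReal s₄ :=
    (rearr_lt_iff hpm hfinp (by linarith) hb₁0.le).1 hρb₁.le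
  have hDa₁s₃ : Dd p a₁ ≤ ENNReal.ofReal s₃ :=
    (rearr_lt_iff hpm hfinp (by linarith) (by linarith)).1 hγa₁.le
  -- the sets A, B
  set A : Set ℝ := p ⁻¹' (Set.Ioc a₁ a₂) with hA_def
  set B : Set ℝ := p ⁻¹' (Set.Ioc b₁ b₂) with hB_def
  have hAmeas : MeasurableSet A := hpm measurableSet_Ioc
  have hBmeas : MeasurableSet B := hpm measurableSet_Ioc
  have hmemA : ∀ t, t ∈ A ↔ (a₁ < p t ∧ p t ≤ a₂) := fun t => by
    simp [hA_def, Set.mem_preimage]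
  have hmemB : ∀ t, t ∈ B ↔ (b₁ < p t ∧ p t ≤ b₂) := fun t => by
    simp [hB_def, Set.mem_preimage]
  have hdisjAB : ∀ t, t ∈ A → t ∈ B → False := by
    intro t htA htB
    have h1 := (hmemA t).1 htA
    have h2 := (hmemB t).1 htB
    linarith [h1.1, h2.2]
  set mA := (volume.restrict (Set.Ioi (0:ℝ))) A with hmA_def
  set mB := (volume.restrict (Set.Ioi (0:ℝ))) B with hmB_def

  -- |·| removal
  have hDdp : ∀ u : ℝ, Dd p u = (volume.restrict (Set.Ioi (0:ℝ))) {z | u < p z} := by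
    intro u; rw [Dd]; congr 1; ext z; simp [abs_of_nonneg (hppos z)]
  have hmA_ne0 : mA ≠ 0 := by
    intro hc
    have hsplit : {z : ℝ | a₁ < p z} = A ∪ {z : ℝ | a₂ < p z} := by
      ext z
      simp only [Set.mem_union, mem_setOf_eq]
      constructor
      · intro hz
        rcases le_or_gt (p z) a₂ with h | h
        · exact Or.inl ((hmemA z).2 ⟨hz, h⟩)
        · exact Or.inr h
      · rintro (h1 | h2)
        · exact ((hmemA z).1 h1).1
        · linarith
    have hdisj2 : Disjoint A {z : ℝ | a₂ < p z} := by
      rw [Set.disjoint_left]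
      intro z hz1 hz2
      have h1 := (hmemA z).1 hz1
      simp only [mem_setOf_eq] at hz2
      linarith [h1.2]
    have hmeas2 : MeasurableSet {z : ℝ | a₂ < p z} := measurableSet_lt measurable_const hpm
    have hkey : Dd p a₁ = mA + Dd p a₂ := by
      rw [hDdp, hDdp, hsplit, measure_union hdisj2 hmeas2]
    rw [hc, zero_add] at hkey
    exact absurd (hkey ▸ hDa₂) (not_le.2 hDa₁)
  have hmA_fin : mA ≠ ∞ := by
    refine ne_top_of_le_ne_top ENNReal.ofReal_ne_top (le_trans ?_ hDa₁s₃)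
    rw [hDdp]
    exact measure_mono (fun z hz => ((hmemA z).1 hz).1)
  have hmB_ne0 : mB ≠ 0 := by
    intro hc
    have hsplit : {z : ℝ | b₁ < p z} = B ∪ {z : ℝ | b₂ < p z} := by
      ext z
      simp only [Set.mem_union, mem_setOf_eq]
      constructor
      · intro hz
        rcases le_or_gt (p z) b₂ with h | h
        · exact Or.inl ((hmemB z).2 ⟨hz, h⟩)
        · exact Or.inr h
      · rintro (h1 | h2)
        · exact ((hmemB z).1 h1).1
        · linarith
    have hdisj2 : Disjoint B {z : ℝ | b₂ < p z} := by
      rw [Set.disjoint_left]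
      intro z hz1 hz2
      have h1 := (hmemB z).1 hz1
      simp only [mem_setOf_eq] at hz2
      linarith [h1.2]
    have hmeas2 : MeasurableSet {z : ℝ | b₂ < p z} := measurableSet_lt measurable_const hpm
    have hkey : Dd p b₁ = mB + Dd p b₂ := by
      rw [hDdp, hDdp, hsplit, measure_union hdisj2 hmeas2]
    rw [hc, zero_add] at hkey
    exact absurd (hkey ▸ hDb₂) (not_le.2 hDb₁)
  have hmB_fin : mB ≠ ∞ := by
    refine ne_top_of_le_ne_top ENNReal.ofReal_ne_top (le_trans ?_ hDb₁s₄)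
    rw [hDdp]
    exact measure_mono (fun z hz => ((hmemB z).1 hz).1)

  -- the perturbation parameters
  set k := mA.toReal / mB.toReal with hk_def
  have hk_pos : 0 < k := by
    apply div_pos <;> [exact ENNReal.toReal_pos hmA_ne0 hmA_fin;
      exact ENNReal.toReal_pos hmB_ne0 hmB_fin]
  set c₀ := min (min ((α - β)/2) ((γ - ρ)/2)) (min ((β - ρ)/2) ((β - γ)/4)) with hc₀_def
  have hc₀_pos : 0 < c₀ := by
    simp only [hc₀_def, lt_min_iff]
    refine ⟨⟨by linarith, by linarith⟩, by linarith, by linarith⟩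
  set δ := c₀ / (2*(1+k)) with hδ_def
  set δ' := δ * k with hδ'_def
  have hδ_pos : 0 < δ := by
    apply div_pos hc₀_pos; nlinarith
  have hδ'_pos : 0 < δ' := mul_pos hδ_pos hk_pos
  have hsum : δ + δ' = c₀ / 2 := by
    have h1k : (0:ℝ) < 1 + k := by linarith
    rw [hδ'_def, ← mul_one_add, hδ_def, div_mul_eq_mul_div, mul_div_mul_right _ _ h1k.ne']
  have hK1 : a₂ + δ + δ' < α := by
    have h1 : c₀ ≤ (α - β)/2 := le_trans (min_le_left _ _) (min_le_left _ _)
    simp only [ha₂_def]; nlinarith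
  have hK2 : ρ < b₁ - δ - δ' := by
    have h1 : c₀ ≤ (γ - ρ)/2 := le_trans (min_le_left _ _) (min_le_right _ _)
    simp only [hb₁_def]; nlinarith
  have hK3 : b₁ + δ < a₁ := by
    have h1 : c₀ ≤ (β - ρ)/2 := le_trans (min_le_right _ _) (min_le_left _ _)
    simp only [hb₁_def, ha₁_def]; nlinarith
  have hK4 : b₂ + δ' < a₁ := by
    have h1 : c₀ ≤ (β - γ)/4 := le_trans (min_le_right _ _) (min_le_right _ _)
    simp only [hb₂_def, ha₁_def]; nlinarith
  have hδ'b₁ : δ' < b₁ := by nlinarith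
  -- the perturbation
  set d : ℝ → ℝ := fun t =>
    A.indicator (fun _ => δ) t - B.indicator (fun _ => δ') t with hd_def
  have hdm : Measurable d :=
    (measurable_const.indicator hAmeas).sub (measurable_const.indicator hBmeas)
  have hdA : ∀ t ∈ A, d t = δ := by
    intro t ht
    simp only [hd_def, Set.indicator_of_mem ht,
      Set.indicator_of_notMem (fun hb => hdisjAB t ht hb), sub_zero]
  have hdB : ∀ t ∈ B, d t = -δ' := by
    intro t ht
    simp only [hd_def, Set.indicator_of_notMem (fun ha => hdisjAB t ha ht),
      Set.indicator_of_mem ht, zero_sub]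
  have hdO : ∀ t, t ∉ A → t ∉ B → d t = 0 := by
    intro t ha hb
    simp only [hd_def, Set.indicator_of_notMem ha, Set.indicator_of_notMem hb, sub_zero]
  set q₁ : ℝ → ℝ := fun t => p t + d t with hq₁_def
  set q₂ : ℝ → ℝ := fun t => p t - d t with hq₂_def
  have hq₁m : Measurable q₁ := hpm.add hdm
  have hq₂m : Measurable q₂ := hpm.sub hdm

  have hq₁pos : ∀ t, 0 ≤ q₁ t := by
    intro t
    simp only [hq₁_def]
    by_cases htA : t ∈ A
    · rw [hdA t htA]; linarith [hppos t]
    · by_cases htB : t ∈ B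
      · rw [hdB t htB]
        have h1 := ((hmemB t).1 htB).1
        linarith
      · rw [hdO t htA htB]; linarith [hppos t]
  have hq₂pos : ∀ t, 0 ≤ q₂ t := by
    intro t
    simp only [hq₂_def]
    by_cases htA : t ∈ A
    · rw [hdA t htA]
      have h1 := ((hmemA t).1 htA).1
      linarith
    · by_cases htB : t ∈ B
      · rw [hdB t htB]; linarith [hppos t]
      · rw [hdO t htA htB]; linarith [hppos t]
  have hd_int : Integrable d (volume.restrict (Set.Ioi (0:ℝ))) := by
    apply Integrable.sub
    · rw [integrable_indicator_iff hAmeas]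
      exact integrableOn_const hmA_fin
    · rw [integrable_indicator_iff hBmeas]
      exact integrableOn_const hmB_fin

  have hq₁_int : Integrable q₁ (volume.restrict (Set.Ioi (0:ℝ))) := hp_int.add hd_int
  have hq₂_int : Integrable q₂ (volume.restrict (Set.Ioi (0:ℝ))) := hp_int.sub hd_int
  have hfinq₁ := fin_of_integrable hq₁_int
  have hfinq₂ := fin_of_integrable hq₂_int

  -- pointwise value of G on A and B
  have hGA : ∀ t ∈ A, G t = p t := by
    intro t ht
    have h1 := ((hmemA t).1 ht).1
    rcases le_or_gt (G t) 0 with h | h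
    · exfalso
      have : p t = 0 := by simp [hp_def, max_eq_right h]
      rw [this] at h1; linarith
    · simp [hp_def, max_eq_left h.le]
  have hGB : ∀ t ∈ B, G t = p t := by
    intro t ht
    have h1 := ((hmemB t).1 ht).1
    rcases le_or_gt (G t) 0 with h | h
    · exfalso
      have : p t = 0 := by simp [hp_def, max_eq_right h]
      rw [this] at h1; linarith
    · simp [hp_def, max_eq_left h.le]
  -- ae identification of the positive/negative parts of the perturbed functions
  have hq₁ae : posPart' (fun t => x t + d t) =ᵐ[volume.restrict (Set.Ioi (0:ℝ))] q₁ := by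
    filter_upwards [hxG] with t ht
    show max (x t + d t) 0 = q₁ t
    rw [ht]
    by_cases htA : t ∈ A
    · rw [hdA t htA, hGA t htA]
      have h1 := ((hmemA t).1 htA).1
      simp only [hq₁_def, hdA t htA]
      exact max_eq_left (by linarith)
    · by_cases htB : t ∈ B
      · rw [hdB t htB, hGB t htB]
        have h1 := ((hmemB t).1 htB).1
        simp only [hq₁_def, hdB t htB]
        exact max_eq_left (by linarith)
      · rw [hdO t htA htB]
        simp only [hq₁_def, hdO t htA htB, add_zero]
        rfl
  have hq₂ae : posPart' (fun t => x t - d t) =ᵐ[volume.restrict (Set.Ioi (0:ℝ))] q₂ := by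
    filter_upwards [hxG] with t ht
    show max (x t - d t) 0 = q₂ t
    rw [ht]
    by_cases htA : t ∈ A
    · rw [hdA t htA, hGA t htA]
      have h1 := ((hmemA t).1 htA).1
      simp only [hq₂_def, hdA t htA]
      exact max_eq_left (by linarith)
    · by_cases htB : t ∈ B
      · rw [hdB t htB, hGB t htB]
        have h1 := ((hmemB t).1 htB).1
        simp only [hq₂_def, hdB t htB]
        exact max_eq_left (by linarith)
      · rw [hdO t htA htB]
        simp only [hq₂_def, hdO t htA htB, sub_zero]
        rfl
  have hneg₁ae : negPart' (fun t => x t + d t)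
      =ᵐ[volume.restrict (Set.Ioi (0:ℝ))] negPart' x := by
    filter_upwards [hxG] with t ht
    show max (-(x t + d t)) 0 = max (-x t) 0
    rw [ht]
    by_cases htA : t ∈ A
    · rw [hdA t htA, hGA t htA]
      have h1 := ((hmemA t).1 htA).1
      rw [max_eq_right (by linarith), max_eq_right (by linarith)]
    · by_cases htB : t ∈ B
      · rw [hdB t htB, hGB t htB]
        have h1 := ((hmemB t).1 htB).1
        rw [max_eq_right (by linarith), max_eq_right (by linarith)]
      · rw [hdO t htA htB, add_zero]
  have hneg₂ae : negPart' (fun t => x t - d t)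
      =ᵐ[volume.restrict (Set.Ioi (0:ℝ))] negPart' x := by
    filter_upwards [hxG] with t ht
    show max (-(x t - d t)) 0 = max (-x t) 0
    rw [ht]
    by_cases htA : t ∈ A
    · rw [hdA t htA, hGA t htA]
      have h1 := ((hmemA t).1 htA).1
      rw [max_eq_right (by linarith), max_eq_right (by linarith)]
    · by_cases htB : t ∈ B
      · rw [hdB t htB, hGB t htB]
        have h1 := ((hmemB t).1 htB).1
        rw [max_eq_right (by linarith), max_eq_right (by linarith)]
      · rw [hdO t htA htB, sub_zero]
  -- distribution-function representations for q₁, q₂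
  have hDdq₁ : ∀ u : ℝ, Dd q₁ u = (volume.restrict (Set.Ioi (0:ℝ))) {z | u < q₁ z} := by
    intro u; rw [Dd]; congr 1; ext z; simp [abs_of_nonneg (hq₁pos z)]
  have hDdq₂ : ∀ u : ℝ, Dd q₂ u = (volume.restrict (Set.Ioi (0:ℝ))) {z | u < q₂ z} := by
    intro u; rw [Dd]; congr 1; ext z; simp [abs_of_nonneg (hq₂pos z)]
  -- region facts
  have hset_q₁_low : ∀ u : ℝ, u ≤ b₁ - δ' → Dd q₁ u = Dd p u := by
    intro u hu
    rw [hDdq₁, hDdp]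
    congr 1
    ext z
    simp only [mem_setOf_eq, hq₁_def]
    by_cases hzA : z ∈ A
    · have h1 := (hmemA z).1 hzA
      rw [hdA z hzA]
      constructor <;> intro <;> linarith
    · by_cases hzB : z ∈ B
      · have h1 := (hmemB z).1 hzB
        rw [hdB z hzB]
        constructor <;> intro <;> linarith
      · rw [hdO z hzA hzB, add_zero]
  have hset_q₁_high : ∀ u : ℝ, a₂ + δ ≤ u → Dd q₁ u = Dd p u := by
    intro u hu
    rw [hDdq₁, hDdp]
    congr 1
    ext z
    simp only [mem_setOf_eq, hq₁_def]
    by_cases hzA : z ∈ A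
    · have h1 := (hmemA z).1 hzA
      rw [hdA z hzA]
      constructor <;> intro <;> linarith
    · by_cases hzB : z ∈ B
      · have h1 := (hmemB z).1 hzB
        rw [hdB z hzB]
        constructor <;> intro <;> linarith
      · rw [hdO z hzA hzB, add_zero]
  have hset_q₂_low : ∀ u : ℝ, u ≤ b₁ → Dd q₂ u = Dd p u := by
    intro u hu
    rw [hDdq₂, hDdp]
    congr 1
    ext z
    simp only [mem_setOf_eq, hq₂_def]
    by_cases hzA : z ∈ A
    · have h1 := (hmemA z).1 hzA
      rw [hdA z hzA]
      constructor <;> intro <;> linarith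
    · by_cases hzB : z ∈ B
      · have h1 := (hmemB z).1 hzB
        rw [hdB z hzB]
        constructor <;> intro <;> linarith
      · rw [hdO z hzA hzB, sub_zero]
  have hset_q₂_sub : ∀ u : ℝ, b₂ + δ' ≤ u → Dd q₂ u ≤ Dd p u := by
    intro u hu
    rw [hDdq₂, hDdp]
    apply measure_mono
    intro z hz
    simp only [mem_setOf_eq, hq₂_def] at hz ⊢
    by_cases hzA : z ∈ A
    · rw [hdA z hzA] at hz; linarith
    · by_cases hzB : z ∈ B
      · have h1 := (hmemB z).1 hzB
        rw [hdB z hzB] at hz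
        linarith
      · rw [hdO z hzA hzB, sub_zero] at hz; exact hz
  -- shift comparisons
  have hshift₁ : ∀ u : ℝ, Dd q₁ u ≤ Dd p (u - δ) := by
    intro u
    rw [hDdq₁, hDdp]
    apply measure_mono
    intro z hz
    simp only [mem_setOf_eq, hq₁_def] at hz ⊢
    by_cases hzA : z ∈ A
    · rw [hdA z hzA] at hz; linarith
    · by_cases hzB : z ∈ B
      · rw [hdB z hzB] at hz; linarith
      · rw [hdO z hzA hzB, add_zero] at hz; linarith
  have hshift₂ : ∀ u : ℝ, Dd q₂ u ≤ Dd p (u - δ') := by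
    intro u
    rw [hDdq₂, hDdp]
    apply measure_mono
    intro z hz
    simp only [mem_setOf_eq, hq₂_def] at hz ⊢
    by_cases hzA : z ∈ A
    · rw [hdA z hzA] at hz; linarith
    · by_cases hzB : z ∈ B
      · rw [hdB z hzB] at hz; linarith
      · rw [hdO z hzA hzB, sub_zero] at hz; linarith
  have hshiftup₁ : ∀ u : ℝ, Dd p (u + δ') ≤ Dd q₁ u := by
    intro u
    rw [hDdq₁, hDdp]
    apply measure_mono
    intro z hz
    simp only [mem_setOf_eq, hq₁_def] at hz ⊢
    by_cases hzA : z ∈ A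
    · rw [hdA z hzA]; linarith
    · by_cases hzB : z ∈ B
      · rw [hdB z hzB]; linarith
      · rw [hdO z hzA hzB, add_zero]; linarith
  have hshiftup₂ : ∀ u : ℝ, Dd p (u + δ) ≤ Dd q₂ u := by
    intro u
    rw [hDdq₂, hDdp]
    apply measure_mono
    intro z hz
    simp only [mem_setOf_eq, hq₂_def] at hz ⊢
    by_cases hzA : z ∈ A
    · rw [hdA z hzA]; linarith
    · by_cases hzB : z ∈ B
      · rw [hdB z hzB]; linarith
      · rw [hdO z hzA hzB, sub_zero]; linarith

  -- the key balance identity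
  have hbal : ENNReal.ofReal δ * mA = ENNReal.ofReal δ' * mB := by
    rw [← ENNReal.ofReal_toReal hmA_fin, ← ENNReal.ofReal_toReal hmB_fin,
      ← ENNReal.ofReal_mul hδ_pos.le, ← ENNReal.ofReal_mul hδ'_pos.le]
    congr 1
    rw [hδ'_def, hk_def]
    have hmb0 : mB.toReal ≠ 0 := (ENNReal.toReal_pos hmB_ne0 hmB_fin).ne'
    field_simp
  -- tail equalities
  have tails₁ : ∫⁻ u in Ioi (b₁ - δ'), Dd q₁ u = ∫⁻ u in Ioi (b₁ - δ'), Dd p u := by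
    have hθ : (0:ℝ) ≤ b₁ - δ' := by linarith
    rw [tail_eq q₁ hq₁m hq₁pos hθ, tail_eq p hpm hppos hθ]
    have hptid : ∀ z, (ENNReal.ofReal (q₁ z) - ENNReal.ofReal (b₁ - δ'))
        + B.indicator (fun _ => ENNReal.ofReal δ') z
        = (ENNReal.ofReal (p z) - ENNReal.ofReal (b₁ - δ'))
        + A.indicator (fun _ => ENNReal.ofReal δ) z := by
      intro z
      by_cases hzA : z ∈ A
      · have h1 := (hmemA z).1 hzA
        rw [Set.indicator_of_mem hzA, Set.indicator_of_notMem (fun hb => hdisjAB z hzA hb),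
          add_zero]
        simp only [hq₁_def, hdA z hzA]
        rw [← ENNReal.ofReal_sub _ hθ, ← ENNReal.ofReal_sub _ hθ,
          ← ENNReal.ofReal_add (by linarith) hδ_pos.le]
        congr 1
        ring
      · by_cases hzB : z ∈ B
        · have h1 := (hmemB z).1 hzB
          rw [Set.indicator_of_notMem hzA, Set.indicator_of_mem hzB, add_zero]
          simp only [hq₁_def, hdB z hzB]
          rw [← ENNReal.ofReal_sub _ hθ, ← ENNReal.ofReal_sub _ hθ,
            ← ENNReal.ofReal_add (by linarith) hδ'_pos.le]
          congr 1
          ring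
        · rw [Set.indicator_of_notMem hzA, Set.indicator_of_notMem hzB, add_zero, add_zero]
          simp only [hq₁_def, hdO z hzA hzB, add_zero]
    have hsum1 : (∫⁻ z in Ioi (0:ℝ), (ENNReal.ofReal (q₁ z) - ENNReal.ofReal (b₁ - δ')))
          + ENNReal.ofReal δ' * mB
        = (∫⁻ z in Ioi (0:ℝ), (ENNReal.ofReal (p z) - ENNReal.ofReal (b₁ - δ')))
          + ENNReal.ofReal δ * mA := by
      have hiB : ∫⁻ z in Ioi (0:ℝ), B.indicator (fun _ => ENNReal.ofReal δ') z
          = ENNReal.ofReal δ' * mB := by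
        rw [lintegral_indicator hBmeas, setLIntegral_const]
      have hiA : ∫⁻ z in Ioi (0:ℝ), A.indicator (fun _ => ENNReal.ofReal δ) z
          = ENNReal.ofReal δ * mA := by
        rw [lintegral_indicator hAmeas, setLIntegral_const]
      rw [← hiB, ← hiA,
        ← lintegral_add_left (f := fun z => ENNReal.ofReal (q₁ z) - ENNReal.ofReal (b₁ - δ')) ((hq₁m.ennreal_ofReal).sub measurable_const),
        ← lintegral_add_left (f := fun z => ENNReal.ofReal (p z) - ENNReal.ofReal (b₁ - δ')) ((hpm.ennreal_ofReal).sub measurable_const)]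
      exact lintegral_congr hptid
    rw [hbal] at hsum1
    have hfinB' : ENNReal.ofReal δ' * mB ≠ ∞ :=
      ENNReal.mul_ne_top ENNReal.ofReal_ne_top hmB_fin
    rw [add_comm _ (ENNReal.ofReal δ' * mB), add_comm _ (ENNReal.ofReal δ' * mB)] at hsum1
    exact (ENNReal.add_right_inj hfinB').1 hsum1
  have tails₂ : ∫⁻ u in Ioi b₁, Dd q₂ u = ∫⁻ u in Ioi b₁, Dd p u := by
    have hθ : (0:ℝ) ≤ b₁ := hb₁0.le
    rw [tail_eq q₂ hq₂m hq₂pos hθ, tail_eq p hpm hppos hθ]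
    have hptid : ∀ z, (ENNReal.ofReal (q₂ z) - ENNReal.ofReal b₁)
        + A.indicator (fun _ => ENNReal.ofReal δ) z
        = (ENNReal.ofReal (p z) - ENNReal.ofReal b₁)
        + B.indicator (fun _ => ENNReal.ofReal δ') z := by
      intro z
      by_cases hzA : z ∈ A
      · have h1 := (hmemA z).1 hzA
        rw [Set.indicator_of_mem hzA, Set.indicator_of_notMem (fun hb => hdisjAB z hzA hb),
          add_zero]
        simp only [hq₂_def, hdA z hzA]
        rw [← ENNReal.ofReal_sub _ hθ, ← ENNReal.ofReal_sub _ hθ,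
          ← ENNReal.ofReal_add (by linarith) hδ_pos.le]
        congr 1
        ring
      · by_cases hzB : z ∈ B
        · have h1 := (hmemB z).1 hzB
          rw [Set.indicator_of_notMem hzA, Set.indicator_of_mem hzB, add_zero]
          simp only [hq₂_def, hdB z hzB]
          rw [← ENNReal.ofReal_sub _ hθ, ← ENNReal.ofReal_sub _ hθ,
            ← ENNReal.ofReal_add (by linarith) hδ'_pos.le]
          congr 1
          ring
        · rw [Set.indicator_of_notMem hzA, Set.indicator_of_notMem hzB, add_zero, add_zero]
          simp only [hq₂_def, hdO z hzA hzB, sub_zero]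
    have hsum1 : (∫⁻ z in Ioi (0:ℝ), (ENNReal.ofReal (q₂ z) - ENNReal.ofReal b₁))
          + ENNReal.ofReal δ * mA
        = (∫⁻ z in Ioi (0:ℝ), (ENNReal.ofReal (p z) - ENNReal.ofReal b₁))
          + ENNReal.ofReal δ' * mB := by
      have hiB : ∫⁻ z in Ioi (0:ℝ), B.indicator (fun _ => ENNReal.ofReal δ') z
          = ENNReal.ofReal δ' * mB := by
        rw [lintegral_indicator hBmeas, setLIntegral_const]
      have hiA : ∫⁻ z in Ioi (0:ℝ), A.indicator (fun _ => ENNReal.ofReal δ) z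
          = ENNReal.ofReal δ * mA := by
        rw [lintegral_indicator hAmeas, setLIntegral_const]
      rw [← hiB, ← hiA,
        ← lintegral_add_left (f := fun z => ENNReal.ofReal (q₂ z) - ENNReal.ofReal b₁) ((hq₂m.ennreal_ofReal).sub measurable_const),
        ← lintegral_add_left (f := fun z => ENNReal.ofReal (p z) - ENNReal.ofReal b₁) ((hpm.ennreal_ofReal).sub measurable_const)]
      exact lintegral_congr hptid
    rw [← hbal] at hsum1
    have hfinA' : ENNReal.ofReal δ * mA ≠ ∞ :=
      ENNReal.mul_ne_top ENNReal.ofReal_ne_top hmA_fin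
    rw [add_comm _ (ENNReal.ofReal δ * mA), add_comm _ (ENNReal.ofReal δ * mA)] at hsum1
    exact (ENNReal.add_right_inj hfinA').1 hsum1

  -- Phi comparison lemmas
  have low₁ : ∀ T : ℝ≥0∞, T ≤ ENNReal.ofReal s₁ → Phi q₁ T ≤ Phi p T := by
    intro T hT
    refine setLIntegral_mono ((Dd_measurable p).min measurable_const) ?_
    intro u hu
    rcases le_or_gt u (b₁ - δ') with h1 | h1
    · rw [hset_q₁_low u h1]
    · rcases lt_or_ge u (a₂ + δ) with h2 | h2
      · have hDpu : ENNReal.ofReal s₁ < Dd p u :=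
          (lt_rearr_iff hpm hfinp h0 (le_of_lt hu)).1 (by simp only [← hα_def]; linarith)
        rw [min_eq_right (le_trans hT hDpu.le)]
        exact min_le_right _ _
      · rw [hset_q₁_high u h2]
  have low₂ : ∀ T : ℝ≥0∞, T ≤ ENNReal.ofReal s₂ → Phi q₂ T ≤ Phi p T := by
    intro T hT
    refine setLIntegral_mono ((Dd_measurable p).min measurable_const) ?_
    intro u hu
    rcases le_or_gt u b₁ with h1 | h1
    · rw [hset_q₂_low u h1]
    · rcases lt_or_ge u (b₂ + δ') with h2 | h2
      · have hDpu : ENNReal.ofReal s₂ < Dd p u :=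
          (lt_rearr_iff hpm hfinp (by linarith) (le_of_lt hu)).1
            (by simp only [← hβ_def]; linarith)
        rw [min_eq_right (le_trans hT hDpu.le)]
        exact min_le_right _ _
      · exact min_le_min (hset_q₂_sub u h2) le_rfl
  have mid₁ : ∀ t : ℝ, s₁ ≤ t →
      Phi q₁ (ENNReal.ofReal t) ≤ Phi p (ENNReal.ofReal s₁) + ENNReal.ofReal (α * (t - s₁)) := by
    intro t ht
    have hb : ∀ u, α ≤ u → Dd q₁ u ≤ ENNReal.ofReal s₁ := by
      intro u hu
      rw [hset_q₁_high u (by linarith)]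
      exact le_trans (Dd_antitone p hu) (Dd_rearr_le hpm hfinp h0)
    have hcl := clamp_est (Dd q₁) (Dd_measurable q₁) (by linarith : (0:ℝ) ≤ α) h0.le ht hb
    calc Phi q₁ (ENNReal.ofReal t)
        ≤ Phi q₁ (ENNReal.ofReal s₁) + ENNReal.ofReal (t - s₁) * ENNReal.ofReal α := hcl
      _ ≤ Phi p (ENNReal.ofReal s₁) + ENNReal.ofReal (α * (t - s₁)) := by
          gcongr
          · exact low₁ _ le_rfl
          · rw [← ENNReal.ofReal_mul (by linarith)]
            exact ENNReal.ofReal_le_ofReal (le_of_eq (by ring))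
  have mid₂ : ∀ t : ℝ, s₂ ≤ t →
      Phi q₂ (ENNReal.ofReal t) ≤ Phi p (ENNReal.ofReal s₁) + ENNReal.ofReal (α * (t - s₁)) := by
    intro t ht
    have hb : ∀ u, β ≤ u → Dd q₂ u ≤ ENNReal.ofReal s₂ := by
      intro u hu
      refine le_trans (hset_q₂_sub u (by linarith)) ?_
      exact le_trans (Dd_antitone p hu) (Dd_rearr_le hpm hfinp (by linarith))
    have hcl := clamp_est (Dd q₂) (Dd_measurable q₂) (by linarith : (0:ℝ) ≤ β)
      (by linarith : (0:ℝ) ≤ s₂) ht hb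
    have hb2 : ∀ u, α ≤ u → Dd p u ≤ ENNReal.ofReal s₁ := fun u hu =>
      le_trans (Dd_antitone p hu) (Dd_rearr_le hpm hfinp h0)
    have hcl2 := clamp_est (Dd p) (Dd_measurable p) (by linarith : (0:ℝ) ≤ α) h0.le h12.le hb2
    calc Phi q₂ (ENNReal.ofReal t)
        ≤ Phi q₂ (ENNReal.ofReal s₂) + ENNReal.ofReal (t - s₂) * ENNReal.ofReal β := hcl
      _ ≤ (Phi p (ENNReal.ofReal s₁) + ENNReal.ofReal (s₂ - s₁) * ENNReal.ofReal α)
            + ENNReal.ofReal (t - s₂) * ENNReal.ofReal β := by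
          gcongr
          exact le_trans (low₂ _ le_rfl) hcl2
      _ ≤ Phi p (ENNReal.ofReal s₁) + ENNReal.ofReal (α * (t - s₁)) := by
          rw [add_assoc]
          gcongr
          rw [← ENNReal.ofReal_mul (by linarith), ← ENNReal.ofReal_mul (by linarith),
            ← ENNReal.ofReal_add (by nlinarith) (by nlinarith)]
          refine ENNReal.ofReal_le_ofReal ?_
          nlinarith [mul_nonneg (sub_nonneg.2 hαβ.le) (sub_nonneg.2 ht)]
  have high₁ : ∀ t : ℝ, s₄ ≤ t → Phi q₁ (ENNReal.ofReal t) = Phi p (ENNReal.ofReal t) := by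
    intro t ht
    have hθ0 : (0:ℝ) ≤ b₁ - δ' := by linarith
    have hsplit : Ioi (0:ℝ) = Ioc 0 (b₁ - δ') ∪ Ioi (b₁ - δ') :=
      (Ioc_union_Ioi_eq_Ioi hθ0).symm
    have hdisj : Disjoint (Ioc (0:ℝ) (b₁ - δ')) (Ioi (b₁ - δ')) := by
      rw [Set.disjoint_left]
      intro u h1 h2
      exact absurd h1.2 (not_le.2 h2)
    have hq₁b : ∀ u : ℝ, b₁ - δ' < u → Dd q₁ u ≤ ENNReal.ofReal t := by
      intro u hu
      refine le_trans (hshift₁ u) (le_trans ?_ (ENNReal.ofReal_le_ofReal ht))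
      refine le_trans (Dd_antitone p (by linarith : b₁ - δ' - δ ≤ u - δ)) ?_
      exact (rearr_lt_iff hpm hfinp (by linarith) (by linarith)).1
        (by simp only [← hρ_def]; linarith)
    have hpb : ∀ u : ℝ, b₁ - δ' < u → Dd p u ≤ ENNReal.ofReal t := by
      intro u hu
      refine le_trans ?_ (ENNReal.ofReal_le_ofReal ht)
      refine le_trans (Dd_antitone p (le_of_lt hu)) ?_
      exact (rearr_lt_iff hpm hfinp (by linarith) (by linarith)).1
        (by simp only [← hρ_def]; linarith)
    rw [Phi, Phi, hsplit, lintegral_union measurableSet_Ioi hdisj,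
      lintegral_union measurableSet_Ioi hdisj]
    congr 1
    · refine setLIntegral_congr_fun measurableSet_Ioc ?_
      intro u hu
      beta_reduce
      rw [hset_q₁_low u hu.2]
    · calc ∫⁻ u in Ioi (b₁ - δ'), min (Dd q₁ u) (ENNReal.ofReal t)
          = ∫⁻ u in Ioi (b₁ - δ'), Dd q₁ u := by
            refine setLIntegral_congr_fun measurableSet_Ioi ?_
            intro u hu
            exact min_eq_left (hq₁b u hu)
        _ = ∫⁻ u in Ioi (b₁ - δ'), Dd p u := tails₁
        _ = ∫⁻ u in Ioi (b₁ - δ'), min (Dd p u) (ENNReal.ofReal t) := by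
            refine (setLIntegral_congr_fun measurableSet_Ioi ?_)
            intro u hu
            exact (min_eq_left (hpb u hu)).symm
  have high₂ : ∀ t : ℝ, s₄ ≤ t → Phi q₂ (ENNReal.ofReal t) = Phi p (ENNReal.ofReal t) := by
    intro t ht
    have hθ0 : (0:ℝ) ≤ b₁ := hb₁0.le
    have hsplit : Ioi (0:ℝ) = Ioc 0 b₁ ∪ Ioi b₁ := (Ioc_union_Ioi_eq_Ioi hθ0).symm
    have hdisj : Disjoint (Ioc (0:ℝ) b₁) (Ioi b₁) := by
      rw [Set.disjoint_left]
      intro u h1 h2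
      exact absurd h1.2 (not_le.2 h2)
    have hq₂b : ∀ u : ℝ, b₁ < u → Dd q₂ u ≤ ENNReal.ofReal t := by
      intro u hu
      refine le_trans (hshift₂ u) (le_trans ?_ (ENNReal.ofReal_le_ofReal ht))
      refine le_trans (Dd_antitone p (by linarith : b₁ - δ' ≤ u - δ')) ?_
      exact (rearr_lt_iff hpm hfinp (by linarith) (by linarith)).1
        (by simp only [← hρ_def]; linarith)
    have hpb : ∀ u : ℝ, b₁ < u → Dd p u ≤ ENNReal.ofReal t := by
      intro u hu
      refine le_trans ?_ (ENNReal.ofReal_le_ofReal ht)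
      refine le_trans (Dd_antitone p (le_of_lt hu)) ?_
      exact (rearr_lt_iff hpm hfinp (by linarith) hb₁0.le).1
        (by simp only [← hρ_def]; linarith)
    rw [Phi, Phi, hsplit, lintegral_union measurableSet_Ioi hdisj,
      lintegral_union measurableSet_Ioi hdisj]
    congr 1
    · refine setLIntegral_congr_fun measurableSet_Ioc ?_
      intro u hu
      beta_reduce
      rw [hset_q₂_low u hu.2]
    · calc ∫⁻ u in Ioi b₁, min (Dd q₂ u) (ENNReal.ofReal t)
          = ∫⁻ u in Ioi b₁, Dd q₂ u := by
            refine setLIntegral_congr_fun measurableSet_Ioi ?_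
            intro u hu
            exact min_eq_left (hq₂b u hu)
        _ = ∫⁻ u in Ioi b₁, Dd p u := tails₂
        _ = ∫⁻ u in Ioi b₁, min (Dd p u) (ENNReal.ofReal t) := by
            refine (setLIntegral_congr_fun measurableSet_Ioi ?_)
            intro u hu
            exact (min_eq_left (hpb u hu)).symm

  -- conversions between real integrals and Phi
  have hmaj1R : ∀ t : ℝ, 0 < t →
      (Phi p (ENNReal.ofReal t)).toReal ≤ (Phi py (ENNReal.ofReal t)).toReal := by
    intro t ht
    have hh := hmaj.1 t ht.le
    rwa [hrx, hry, integral_rearr_eq hpm hfinp ht, integral_rearr_eq hpym hfinpy ht] at hh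
  have hmajE : ∀ t : ℝ, 0 < t → Phi p (ENNReal.ofReal t) ≠ ∞ → Phi py (ENNReal.ofReal t) ≠ ∞ →
      Phi p (ENNReal.ofReal t) ≤ Phi py (ENNReal.ofReal t) := fun t ht h1 h2 =>
    (ENNReal.toReal_le_toReal h1 h2).1 (hmaj1R t ht)
  have hslackE : ∀ t : ℝ, t ∈ Set.Icc s₁ s₄ → Phi p (ENNReal.ofReal s₁) ≠ ∞ →
      Phi py (ENNReal.ofReal t) ≠ ∞ →
      Phi p (ENNReal.ofReal s₁) + ENNReal.ofReal (α * (t - s₁)) ≤ Phi py (ENNReal.ofReal t) := by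
    intro t htI hfin1 hfiny'
    have hs := hslack t htI
    rw [hrx, hry, integral_rearr_eq hpm hfinp h0,
      integral_rearr_eq hpym hfinpy (by linarith [htI.1] : (0:ℝ) < t), ← hα_def] at hs
    calc Phi p (ENNReal.ofReal s₁) + ENNReal.ofReal (α * (t - s₁))
        = ENNReal.ofReal ((Phi p (ENNReal.ofReal s₁)).toReal + α * (t - s₁)) := by
          rw [ENNReal.ofReal_add ENNReal.toReal_nonneg
            (mul_nonneg (by linarith) (by linarith [htI.1])), ENNReal.ofReal_toReal hfin1]
      _ ≤ ENNReal.ofReal ((Phi py (ENNReal.ofReal t)).toReal) := ENNReal.ofReal_le_ofReal hs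
      _ = Phi py (ENNReal.ofReal t) := ENNReal.ofReal_toReal hfiny'
  have Ppos : ∀ t : ℝ, 0 < t → Phi p (ENNReal.ofReal t) ≠ ∞ →
      0 < (Phi p (ENNReal.ofReal t)).toReal := by
    intro t ht hfin'
    refine ENNReal.toReal_pos ?_ hfin'
    have hlow : min (ENNReal.ofReal s₁) (ENNReal.ofReal t) * ENNReal.ofReal α
        ≤ Phi p (ENNReal.ofReal t) := by
      have h1 : ∫⁻ _ in Ioo (0:ℝ) α, min (ENNReal.ofReal s₁) (ENNReal.ofReal t)
          = min (ENNReal.ofReal s₁) (ENNReal.ofReal t) * ENNReal.ofReal α := by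
        rw [setLIntegral_const, Real.volume_Ioo, sub_zero]
      rw [← h1]
      refine le_trans (setLIntegral_mono ((Dd_measurable p).min measurable_const) ?_)
        (lintegral_mono_set (fun z hz => hz.1))
      intro u hu
      refine min_le_min ?_ le_rfl
      exact ((lt_rearr_iff hpm hfinp h0 hu.1.le).1 (by simp only [← hα_def]; exact hu.2)).le
    intro hc
    rw [hc] at hlow
    have h2 : min (ENNReal.ofReal s₁) (ENNReal.ofReal t) * ENNReal.ofReal α = 0 :=
      le_antisymm hlow zero_le
    rcases mul_eq_zero.1 h2 with h3 | h3
    · rcases min_eq_iff.1 h3 with ⟨h4, _⟩ | ⟨h4, _⟩ <;>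
        simp only [ENNReal.ofReal_eq_zero] at h4 <;> linarith
    · simp only [ENNReal.ofReal_eq_zero] at h3; linarith
  -- the main submajorization bounds for the perturbed functions
  have key₁ : ∀ t : ℝ, 0 ≤ t →
      (∫ s in Set.Ioc (0:ℝ) t, rearr q₁ s) ≤ ∫ s in Set.Ioc (0:ℝ) t, rearr py s := by
    intro t ht
    rcases eq_or_lt_of_le ht with rfl | ht'
    · rw [Set.Ioc_self]
      simp
    · rw [integral_rearr_eq hq₁m hfinq₁ ht', integral_rearr_eq hpym hfinpy ht']
      by_cases hPp : Phi p (ENNReal.ofReal t) = ∞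
      · have hinf : Phi q₁ (ENNReal.ofReal t) = ∞ := by
          by_contra hne
          have hsh := Phi_shift_le p q₁ hδ'_pos.le (fun u _ => hshiftup₁ u) (ENNReal.ofReal t)
          rw [hPp] at hsh
          exact (ENNReal.add_ne_top.2
            ⟨ENNReal.mul_ne_top ENNReal.ofReal_ne_top ENNReal.ofReal_ne_top, hne⟩)
            (top_le_iff.1 hsh)
        rw [hinf]
        simpa using ENNReal.toReal_nonneg
      · by_cases hPy : Phi py (ENNReal.ofReal t) = ∞
        · exfalso
          have h1 := hmaj1R t ht'
          rw [hPy] at h1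
          simp only [ENNReal.toReal_top] at h1
          exact absurd h1 (not_le.2 (Ppos t ht' hPp))
        · have hle : Phi q₁ (ENNReal.ofReal t) ≤ Phi py (ENNReal.ofReal t) := by
            rcases le_or_gt t s₁ with hc | hc
            · exact le_trans (low₁ _ (ENNReal.ofReal_le_ofReal hc)) (hmajE t ht' hPp hPy)
            · rcases le_or_gt t s₄ with hc4 | hc4
              · exact le_trans (mid₁ t hc.le) (hslackE t ⟨hc.le, hc4⟩
                  (ne_top_of_le_ne_top hPp (Phi_mono p (ENNReal.ofReal_le_ofReal hc.le))) hPy)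
              · rw [high₁ t hc4.le]
                exact hmajE t ht' hPp hPy
          exact (ENNReal.toReal_le_toReal (ne_top_of_le_ne_top hPy hle) hPy).2 hle
  have key₂ : ∀ t : ℝ, 0 ≤ t →
      (∫ s in Set.Ioc (0:ℝ) t, rearr q₂ s) ≤ ∫ s in Set.Ioc (0:ℝ) t, rearr py s := by
    intro t ht
    rcases eq_or_lt_of_le ht with rfl | ht'
    · rw [Set.Ioc_self]
      simp
    · rw [integral_rearr_eq hq₂m hfinq₂ ht', integral_rearr_eq hpym hfinpy ht']
      by_cases hPp : Phi p (ENNReal.ofReal t) = ∞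
      · have hinf : Phi q₂ (ENNReal.ofReal t) = ∞ := by
          by_contra hne
          have hsh := Phi_shift_le p q₂ hδ_pos.le (fun u _ => hshiftup₂ u) (ENNReal.ofReal t)
          rw [hPp] at hsh
          exact (ENNReal.add_ne_top.2
            ⟨ENNReal.mul_ne_top ENNReal.ofReal_ne_top ENNReal.ofReal_ne_top, hne⟩)
            (top_le_iff.1 hsh)
        rw [hinf]
        simpa using ENNReal.toReal_nonneg
      · by_cases hPy : Phi py (ENNReal.ofReal t) = ∞
        · exfalso
          have h1 := hmaj1R t ht'
          rw [hPy] at h1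
          simp only [ENNReal.toReal_top] at h1
          exact absurd h1 (not_le.2 (Ppos t ht' hPp))
        · have hle : Phi q₂ (ENNReal.ofReal t) ≤ Phi py (ENNReal.ofReal t) := by
            rcases le_or_gt t s₂ with hc | hc
            · exact le_trans (low₂ _ (ENNReal.ofReal_le_ofReal hc)) (hmajE t ht' hPp hPy)
            · rcases le_or_gt t s₄ with hc4 | hc4
              · exact le_trans (mid₂ t hc.le) (hslackE t ⟨by linarith, hc4⟩
                  (ne_top_of_le_ne_top hPp
                    (Phi_mono p (ENNReal.ofReal_le_ofReal (by linarith)))) hPy)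
              · rw [high₂ t hc4.le]
                exact hmajE t ht' hPp hPy
          exact (ENNReal.toReal_le_toReal (ne_top_of_le_ne_top hPy hle) hPy).2 hle
  -- the integral of the perturbation vanishes
  have hiA' : Integrable (A.indicator (fun _ => δ)) (volume.restrict (Set.Ioi (0:ℝ))) := by
    rw [integrable_indicator_iff hAmeas]
    exact integrableOn_const hmA_fin
  have hiB' : Integrable (B.indicator (fun _ => δ')) (volume.restrict (Set.Ioi (0:ℝ))) := by
    rw [integrable_indicator_iff hBmeas]
    exact integrableOn_const hmB_fin
  have hdint_val : ∫ t in Set.Ioi (0:ℝ), d t = 0 := by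
    simp only [hd_def]
    rw [integral_sub hiA' hiB', integral_indicator_const _ hAmeas,
      integral_indicator_const _ hBmeas]
    simp only [smul_eq_mul, measureReal_def, ← hmA_def, ← hmB_def]
    rw [hδ'_def, hk_def]
    have hmb0 : mB.toReal ≠ 0 := (ENNReal.toReal_pos hmB_ne0 hmB_fin).ne'
    have hcan : mB.toReal * (mA.toReal / mB.toReal) = mA.toReal := by field_simp
    linear_combination (-δ) * hcan
  -- assemble the two functions
  refine ⟨fun t => x t + d t, fun t => x t - d t,
    ⟨hx.add hd_int, ?_, ?_, ?_⟩, ⟨hx.sub hd_int, ?_, ?_, ?_⟩, ?_, ?_⟩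
  · -- SubMaj positive parts of x₁
    intro t ht
    rw [show rearr (posPart' fun t => x t + d t) = rearr q₁ from rearr_congr hq₁ae, hry]
    exact key₁ t ht
  · -- SubMaj negative parts of x₁
    intro t ht
    rw [show rearr (negPart' fun t => x t + d t) = rearr (negPart' x) from rearr_congr hneg₁ae]
    exact hmaj.2.1 t ht
  · -- integral equality for x₁
    have h1 : ∫ t in Set.Ioi (0:ℝ), (x t + d t) = (∫ t in Set.Ioi (0:ℝ), x t)
        + ∫ t in Set.Ioi (0:ℝ), d t := integral_add hx hd_int
    rw [h1, hdint_val, add_zero]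
    exact hmaj.2.2
  · -- SubMaj positive parts of x₂
    intro t ht
    rw [show rearr (posPart' fun t => x t - d t) = rearr q₂ from rearr_congr hq₂ae, hry]
    exact key₂ t ht
  · -- SubMaj negative parts of x₂
    intro t ht
    rw [show rearr (negPart' fun t => x t - d t) = rearr (negPart' x) from rearr_congr hneg₂ae]
    exact hmaj.2.1 t ht
  · -- integral equality for x₂
    have h1 : ∫ t in Set.Ioi (0:ℝ), (x t - d t) = (∫ t in Set.Ioi (0:ℝ), x t)
        - ∫ t in Set.Ioi (0:ℝ), d t := integral_sub hx hd_int
    rw [h1, hdint_val, sub_zero]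
    exact hmaj.2.2
  · -- average property
    intro t
    ring
  · -- the two functions are not a.e. equal
    intro hcon
    have h0' : ∀ᵐ t ∂(volume.restrict (Set.Ioi (0:ℝ))), d t = 0 := by
      filter_upwards [hcon] with t ht
      have : x t + d t = x t - d t := ht
      linarith
    have hnull : (volume.restrict (Set.Ioi (0:ℝ))) {t | d t ≠ 0} = 0 := by
      have := h0'
      rw [MeasureTheory.ae_iff] at this
      simpa using this
    have hsub : A ⊆ {t | d t ≠ 0} := by
      intro t ht
      simp only [mem_setOf_eq, hdA t ht]
      exact hδ_pos.ne'
    exact hmA_ne0 (le_antisymm (le_trans (measure_mono hsub) (le_of_eq hnull)) zero_le)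
end
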